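/- arXiv:1408.0649 — 12 statements merged into one kernel-verified Lean document; each statement's English description precedes it below -/
import Mathlib

section
/- Let G be a connected graph of order at least three. If {u,v} is a weak total resolving set for G of minimum cardinality (a weak total metric basis), then u and v are not adjacent. -/
open SimpleGraph

variable {V : Type*}

/-- `W` is a resolving set: every pair of distinct vertices is resolved by some `w ∈ W`. -/
def IsResolvingSet (G : SimpleGraph V) (W : Finset V) : Prop :=
  ∀ u v : V, u ≠ v → ∃ w ∈ W, G.dist u w ≠ G.dist v w

/-- `W` is a weak total resolving set. -/
def IsWTRSet (G : SimpleGraph V) (W : Finset V) : Prop :=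
  IsResolvingSet G W ∧
    ∀ v ∈ W, ∀ u : V, u ∉ W → ∃ w ∈ W, w ≠ v ∧ G.dist u w ≠ G.dist v w

/-- `u` and `v` are twin vertices. -/
def AreTwins (G : SimpleGraph V) (u v : V) : Prop :=
  u ≠ v ∧ G.neighborSet u \ {v} = G.neighborSet v \ {u}

/-- Metric dimension. -/
noncomputable def metricDim (G : SimpleGraph V) : ℕ :=
  sInf {k | ∃ W : Finset V, W.card = k ∧ IsResolvingSet G W}

/-- Weak total metric dimension. -/
noncomputable def wtDim (G : SimpleGraph V) : ℕ :=
  sInf {k | ∃ W : Finset V, W.card = k ∧ IsWTRSet G W}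

/-- Weak total resolving number: least `r` such that every `r`-subset is a WTR-set. -/
noncomputable def resWt (G : SimpleGraph V) : ℕ :=
  sInf {r | ∀ W : Finset V, W.card = r → IsWTRSet G W}

/-- if `{u,v}` is a weak total metric basis of a connected graph of order ≥ 3,
then `u` and `v` are not adjacent. -/
theorem wtmb_pair_not_adjacent [Fintype V] [DecidableEq V] (G : SimpleGraph V) (hG : G.Connected)
    (hn : 3 ≤ Fintype.card V) (u v : V) (huv : u ≠ v)
    (hW : IsWTRSet G {u, v})
    (hmin : ∀ W : Finset V, IsWTRSet G W → ({u, v} : Finset V).card ≤ W.card) :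
    ¬ G.Adj u v := by
  intro hadj
  -- Every vertex outside {u,v} is at distance ≠ 1 from both u and v.
  have key : ∀ x : V, x ∉ ({u, v} : Finset V) → G.dist x u ≠ 1 ∧ G.dist x v ≠ 1 := by
    intro x hx
    constructor
    · obtain ⟨w, hwmem, hwne, hd⟩ := hW.2 v (by simp) x hx
      have hw : w = u := by
        rcases Finset.mem_insert.1 hwmem with h | h
        · exact h
        · exact absurd (Finset.mem_singleton.1 h) hwne
      subst hw
      intro h1
      apply hd
      rw [h1]
      exact (SimpleGraph.dist_eq_one_iff_adj.2 hadj.symm).symm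
    · obtain ⟨w, hwmem, hwne, hd⟩ := hW.2 u (by simp) x hx
      have hw : w = v := by
        rcases Finset.mem_insert.1 hwmem with h | h
        · exact absurd h hwne
        · exact Finset.mem_singleton.1 h
      subst hw
      intro h1
      apply hd
      rw [h1]
      exact (SimpleGraph.dist_eq_one_iff_adj.2 hadj).symm
  -- The set of vertices outside {u,v} is nonempty.
  have hS : (Finset.univ \ ({u, v} : Finset V)).Nonempty := by
    rw [← Finset.card_pos, Finset.card_sdiff_of_subset (Finset.subset_univ _), Finset.card_univ]
    have h2 : ({u, v} : Finset V).card ≤ 2 := Finset.card_insert_le _ _ |>.trans (by simp)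
    omega
  -- Pick x outside {u,v} minimizing distance to u.
  obtain ⟨x, hxmem, hxmin⟩ := Finset.exists_min_image _ (fun x => G.dist x u) hS
  have hxuv : x ∉ ({u, v} : Finset V) := (Finset.mem_sdiff.1 hxmem).2
  have hxu : x ≠ u := by intro h; subst h; simp at hxuv
  have hd0 : G.dist x u ≠ 0 := by
    rw [SimpleGraph.dist_ne_zero_iff_ne_and_reachable]
    exact ⟨hxu, hG.preconnected x u⟩
  have hd1 : G.dist x u ≠ 1 := (key x hxuv).1
  have hd2 : 2 ≤ G.dist x u := by omega
  -- Take a shortest walk from x to u, and let y be the second vertex.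
  obtain ⟨p, hp⟩ := (hG.preconnected x u).exists_walk_length_eq_dist
  cases p with
  | nil => simp at hp; simp [SimpleGraph.dist_self] at hd2
  | cons hxy q =>
    rename_i y
    have hqlen : q.length = G.dist x u - 1 := by
      simp at hp; omega
    have hylow : G.dist x u ≤ 1 + G.dist y u := by
      calc G.dist x u ≤ G.dist x y + G.dist y u := hG.dist_triangle
        _ ≤ 1 + G.dist y u := by
            have : G.dist x y ≤ 1 := by
              rw [SimpleGraph.dist_eq_one_iff_adj.2 hxy]
            omega
    have hyhigh : G.dist y u ≤ G.dist x u - 1 := hqlen ▸ SimpleGraph.dist_le q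
    have hyu : G.dist y u = G.dist x u - 1 := by omega
    -- y is strictly closer to u, so y ∈ {u, v}.
    have hymem : y ∈ ({u, v} : Finset V) := by
      by_contra hy
      have := hxmin y (Finset.mem_sdiff.2 ⟨Finset.mem_univ _, hy⟩)
      omega
    rcases Finset.mem_insert.1 hymem with h | h
    · -- y = u: then dist y u = 0, so dist x u = 1, contradiction
      subst h
      simp [SimpleGraph.dist_self] at hyu
      omega
    · -- y = v: then x is adjacent to v, so dist x v = 1, contradiction
      have h' := Finset.mem_singleton.1 h
      subst h'
      exact (key x hxuv).2 (SimpleGraph.dist_eq_one_iff_adj.2 hxy)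
end

section
/- If {u,v} is a weak total resolving set for a connected graph G, then both u and v have degree at most two in G. -/
open SimpleGraph

variable {V : Type*}

lemma wtr_pair_degree_le_two_aux [Fintype V] [DecidableEq V] (G : SimpleGraph V)
    [DecidableRel G.Adj] (hG : G.Connected) (u v : V) (huv : u ≠ v)
    (hW : IsWTRSet G {u, v}) : G.degree u ≤ 2 := by
  classical
  set d := G.dist u v with hd
  have hdpos : 0 < d := hG.pos_dist_of_ne huv
  -- every neighbor of u other than v has dist to v equal to d-1 or d+1
  have key : ∀ x ∈ (G.neighborFinset u).erase v, G.dist x v = d - 1 ∨ G.dist x v = d + 1 := by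
    intro x hx
    rw [Finset.mem_erase, mem_neighborFinset] at hx
    obtain ⟨hxv, hadj⟩ := hx
    have hxu : x ≠ u := hadj.ne'
    have hxW : x ∉ ({u, v} : Finset V) := by simp [hxu, hxv]
    have hxu1 : G.dist x u = 1 := dist_eq_one_iff_adj.mpr hadj.symm
    obtain ⟨w, hwW, hwne, hdist⟩ := hW.2 u (by simp) x hxW
    have hwv : w = v := by
      rcases Finset.mem_insert.mp hwW with h | h
      · exact absurd h hwne
      · exact Finset.mem_singleton.mp h
    rw [hwv] at hdist
    have h1 : G.dist x v ≤ G.dist x u + G.dist u v := hG.dist_triangle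
    have h2 : G.dist u v ≤ G.dist u x + G.dist x v := hG.dist_triangle
    rw [SimpleGraph.dist_comm (u := u) (v := x)] at h2
    have hne : G.dist x v ≠ d := by simpa [hd] using hdist
    omega
  -- x ↦ dist x v is injective on the erase set
  have inj : Set.InjOn (fun x => G.dist x v)
      ((G.neighborFinset u).erase v : Finset V) := by
    intro x hx y hy hxy
    by_contra hne
    rw [Finset.mem_coe, Finset.mem_erase, mem_neighborFinset] at hx hy
    obtain ⟨w, hwW, hdist⟩ := hW.1 x y hne
    rcases Finset.mem_insert.mp hwW with h | h
    · subst h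
      have h1 : G.dist x w = 1 := dist_eq_one_iff_adj.mpr hx.2.symm
      have h2 : G.dist y w = 1 := dist_eq_one_iff_adj.mpr hy.2.symm
      omega
    · rw [Finset.mem_singleton] at h; subst h
      exact hdist hxy
  by_cases hadjv : G.Adj u v
  · -- v is a neighbor; d = 1, so dist x v = 2 for others
    have hd1 : d = 1 := dist_eq_one_iff_adj.mpr hadjv
    have himg : ∀ x ∈ (G.neighborFinset u).erase v, G.dist x v ∈ ({2} : Finset ℕ) := by
      intro x hx
      have := key x hx
      have hxv : x ≠ v := (Finset.mem_erase.mp hx).1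
      have hpos : 0 < G.dist x v := hG.pos_dist_of_ne hxv
      simp only [Finset.mem_singleton]
      omega
    have hcard : ((G.neighborFinset u).erase v).card ≤ 1 := by
      simpa using Finset.card_le_card_of_injOn _ himg inj
    have hv : v ∈ G.neighborFinset u := by rwa [mem_neighborFinset]
    have : G.degree u = ((G.neighborFinset u).erase v).card + 1 := by
      rw [← G.card_neighborFinset_eq_degree, Finset.card_erase_of_mem hv]
      have : 0 < (G.neighborFinset u).card := Finset.card_pos.mpr ⟨v, hv⟩
      omega
    omega
  · have heq : (G.neighborFinset u).erase v = G.neighborFinset u := by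
      apply Finset.erase_eq_of_notMem
      rwa [mem_neighborFinset]
    have himg : ∀ x ∈ (G.neighborFinset u).erase v,
        G.dist x v ∈ ({d - 1, d + 1} : Finset ℕ) := by
      intro x hx
      have := key x hx
      simp only [Finset.mem_insert, Finset.mem_singleton]
      omega
    have hcard : ((G.neighborFinset u).erase v).card ≤ ({d - 1, d + 1} : Finset ℕ).card :=
      Finset.card_le_card_of_injOn _ himg inj
    have h2 : ({d - 1, d + 1} : Finset ℕ).card ≤ 2 := Finset.card_insert_le _ _ |>.trans (by simp)
    rw [heq, G.card_neighborFinset_eq_degree] at hcard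
    omega

/-- if `{u,v}` is a WTR-set, then `u` and `v` have degree at most two. -/
theorem wtr_pair_degree_le_two [Fintype V] [DecidableEq V] (G : SimpleGraph V) [DecidableRel G.Adj]
    (hG : G.Connected) (u v : V) (huv : u ≠ v) (hW : IsWTRSet G {u, v}) :
    G.degree u ≤ 2 ∧ G.degree v ≤ 2 := by
  have hW' : IsWTRSet G {v, u} := by rwa [Finset.pair_comm v u]
  exact ⟨wtr_pair_degree_le_two_aux G hG u v huv hW,
    wtr_pair_degree_le_two_aux G hG v u huv.symm hW'⟩
end

section
/- If {u,v} is a weak total resolving set for a connected graph G, then there is a unique shortest path between u and v in G. -/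
open SimpleGraph

variable {V : Type*}

lemma walk_getVert_dist_le {V : Type*} {G : SimpleGraph V} (hG : G.Connected) :
    ∀ {u v : V} (p : G.Walk u v) (i : ℕ),
      G.dist u (p.getVert i) ≤ i ∧ G.dist (p.getVert i) v ≤ p.length - i := by
  intro u v p
  induction p with
  | nil =>
    intro i
    rw [Walk.getVert_of_length_le _ (by simp : (Walk.nil : G.Walk _ _).length ≤ i)]
    simp [SimpleGraph.dist_self]
  | @cons a b c h q ih =>
    intro i
    cases i with
    | zero =>
      refine ⟨by simp, ?_⟩
      simpa using SimpleGraph.dist_le (Walk.cons h q)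
    | succ n =>
      obtain ⟨h1, h2⟩ := ih n
      constructor
      · obtain ⟨w, hw⟩ := (hG.preconnected b (q.getVert n)).exists_walk_length_eq_dist
        have := SimpleGraph.dist_le (Walk.cons h w)
        simp only [Walk.length_cons, hw] at this
        rw [Walk.getVert_cons_succ]
        omega
      · simpa [Walk.getVert_cons_succ] using h2

lemma walk_ext_getVert {V : Type*} {G : SimpleGraph V} :
    ∀ {u v : V} (p q : G.Walk u v), p.length = q.length →
      (∀ i, p.getVert i = q.getVert i) → p = q := by
  intro u v p
  induction p with
  | nil =>
    intro q hlen _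
    cases q with
    | nil => rfl
    | cons h' q' => simp at hlen
  | @cons a b c h p ih =>
    intro q hlen hvert
    cases q with
    | nil => simp at hlen
    | @cons _ b' _ h' q' =>
      have hb : b = b' := by
        have := hvert 1
        simpa [Walk.getVert_cons_succ] using this
      subst hb
      have := ih q' (by simpa using hlen) (fun i => by simpa [Walk.getVert_cons_succ] using hvert (i+1))
      exact congrArg (Walk.cons h) this

/-- if `{u, v}` is a WTR-set, then the shortest `u-v` path is unique. -/
theorem wtr_pair_unique_geodesic [Fintype V] [DecidableEq V] (G : SimpleGraph V) (hG : G.Connected)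
    (u v : V) (huv : u ≠ v) (hW : IsWTRSet G {u, v}) :
    ∀ p q : G.Walk u v, p.IsPath → q.IsPath →
      p.length = G.dist u v → q.length = G.dist u v → p = q := by
  intro p q hp hq hpl hql
  apply walk_ext_getVert p q (hpl.trans hql.symm)
  intro i
  by_cases hi : i ≤ p.length
  · by_contra hne
    have key : ∀ (r : G.Walk u v), r.length = G.dist u v →
        G.dist u (r.getVert i) = i ∧ G.dist (r.getVert i) v = G.dist u v - i := by
      intro r hr
      obtain ⟨h1, h2⟩ := walk_getVert_dist_le hG r i
      have htri := hG.dist_triangle (u := u) (v := r.getVert i) (w := v)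
      omega
    obtain ⟨hpu, hpv⟩ := key p hpl
    obtain ⟨hqu, hqv⟩ := key q hql
    obtain ⟨w, hwmem, hwd⟩ := hW.1 _ _ hne
    rcases Finset.mem_insert.mp hwmem with h | h
    · rw [h] at hwd
      have h1 : G.dist (p.getVert i) u = G.dist u (p.getVert i) := SimpleGraph.dist_comm
      have h2 : G.dist (q.getVert i) u = G.dist u (q.getVert i) := SimpleGraph.dist_comm
      omega
    · rw [Finset.mem_singleton] at h
      rw [h] at hwd
      omega
  · rw [Walk.getVert_of_length_le p (by omega), Walk.getVert_of_length_le q (by omega)]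
end

section
/- If {u,v} is a weak total resolving set for a connected graph G, then every neighbor of u (and of v) has degree at most three in G. -/
open SimpleGraph

variable {V : Type*}

lemma card_triple_le (a b c : ℕ × ℕ) : ({a, b, c} : Finset (ℕ × ℕ)).card ≤ 3 := by
  apply (Finset.card_insert_le _ _).trans
  apply Nat.succ_le_succ
  apply (Finset.card_insert_le _ _).trans
  simp

lemma aux_wtr [Fintype V] [DecidableEq V]
    (G : SimpleGraph V) [DecidableRel G.Adj] (hG : G.Connected)
    (u v : V) (huv : u ≠ v) (hW : IsWTRSet G {u, v})
    (x : V) (hx : G.Adj u x) : G.degree x ≤ 3 := by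
  classical
  -- basic distance facts
  have hdz : ∀ y z : V, G.dist y z = 0 → y = z := fun y z h =>
    (hG.dist_eq_zero_iff).mp h
  have htri : ∀ a b c : V, G.dist a c ≤ G.dist a b + G.dist b c :=
    fun a b c => hG.dist_triangle
  have hcomm : ∀ a b : V, G.dist a b = G.dist b a := fun a b => SimpleGraph.dist_comm
  have hxu1 : G.dist x u = 1 := by
    rw [dist_eq_one_iff_adj]; exact hx.symm
  set k := G.dist u v with hk
  set c := G.dist x v with hc
  have hk0 : k ≠ 0 := fun h => huv (hdz u v h)
  -- injectivity of the distance-pair map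
  have hinj : ∀ y z : V, G.dist y u = G.dist z u → G.dist y v = G.dist z v → y = z := by
    intro y z h1 h2
    by_contra hne
    obtain ⟨w, hwmem, hwd⟩ := hW.1 y z hne
    simp only [Finset.mem_insert, Finset.mem_singleton] at hwmem
    rcases hwmem with rfl | rfl <;> [exact hwd h1; exact hwd h2]
  -- WTR conditions
  have h1 : ∀ z : V, z ≠ u → z ≠ v → G.dist z v ≠ k := by
    intro z hzu hzv
    obtain ⟨w, hwmem, hwne, hwd⟩ := hW.2 u (by simp) z (by simp [hzu, hzv])
    simp only [Finset.mem_insert, Finset.mem_singleton] at hwmem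
    rcases hwmem with rfl | rfl
    · exact absurd rfl hwne
    · simpa using hwd
  have h2 : ∀ z : V, z ≠ u → z ≠ v → G.dist z u ≠ k := by
    intro z hzu hzv
    obtain ⟨w, hwmem, hwne, hwd⟩ := hW.2 v (by simp) z (by simp [hzu, hzv])
    simp only [Finset.mem_insert, Finset.mem_singleton] at hwmem
    rcases hwmem with h | h
    · rw [h, hcomm v u] at hwd; exact hwd
    · exact absurd h hwne
  rw [← card_neighborFinset_eq_degree]
  by_cases hxv : x = v
  · -- x = v : all neighbors of v equal u
    subst hxv
    have hsub : G.neighborFinset x ⊆ {u} := by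
      intro y hy
      rw [mem_neighborFinset] at hy
      have hyx : G.dist y x = 1 := by rw [dist_eq_one_iff_adj]; exact hy.symm
      have hyne : y ≠ x := fun h => (by subst h; exact G.irrefl hy)
      simp only [Finset.mem_singleton]
      by_contra hyu
      have hk1 : k = 1 := by rw [hk]; rw [dist_eq_one_iff_adj]; exact hx
      exact h1 y hyu hyne (by rw [hyx, hk1])
    exact (Finset.card_le_card hsub).trans (by simp)
  · have hxu : x ≠ u := fun h => (by subst h; exact G.irrefl hx)
    have hk1 : k ≠ 1 := fun h => h2 x hxu hxv (by rw [hxu1, h])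
    have hck : c ≠ k := h1 x hxu hxv
    have hc0 : c ≠ 0 := fun h => hxv (hdz x v h)
    have hckle : c ≤ 1 + k := by
      have := htri x u v; rw [hxu1] at this; exact this
    have hkcle : k ≤ 1 + c := by
      have := htri u x v
      rw [hcomm u x, hxu1] at this; exact this
    -- per-neighbor numeric facts
    have key : ∀ y ∈ G.neighborFinset x,
        (y = u ∧ G.dist y u = 0 ∧ G.dist y v = k) ∨
        (y = v ∧ G.dist y u = k ∧ G.dist y v = 0 ∧ c = 1) ∨
        (G.dist y u ≠ 0 ∧ G.dist y u ≠ k ∧ G.dist y v ≠ 0 ∧ G.dist y v ≠ k ∧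
         G.dist y u ≤ 2 ∧ k ≤ G.dist y u + G.dist y v ∧ G.dist y v ≤ G.dist y u + k ∧
         G.dist y v ≤ 1 + c ∧ c ≤ 1 + G.dist y v ∧
         ¬(G.dist y u = 1 ∧ G.dist y v = c)) := by
      intro y hy
      rw [mem_neighborFinset] at hy
      have hyx1 : G.dist y x = 1 := by rw [dist_eq_one_iff_adj]; exact hy.symm
      by_cases hyu : y = u
      · subst hyu
        exact Or.inl ⟨rfl, by simp, rfl⟩
      by_cases hyv : y = v
      · refine Or.inr (Or.inl ⟨hyv, ?_, by rw [hyv]; simp, ?_⟩)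
        · rw [hyv, hk]; exact hcomm v u
        · rw [hc, dist_eq_one_iff_adj]; exact hyv ▸ hy
      refine Or.inr (Or.inr ⟨?_, h2 y hyu hyv, ?_, h1 y hyu hyv, ?_, ?_, ?_, ?_, ?_, ?_⟩)
      · exact fun h => hyu (hdz y u h)
      · exact fun h => hyv (hdz y v h)
      · have := htri y x u; rw [hyx1, hxu1] at this; omega
      · have := htri u y v; rw [hcomm u y] at this; exact this
      · exact htri y u v
      · have := htri y x v; rw [hyx1, ← hc] at this; exact this
      · have := htri x y v; rw [hcomm x y, hyx1] at this; exact this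
      · rintro ⟨hdu, hdv⟩
        have : y = x := hinj y x (by rw [hdu, hxu1]) (by rw [hdv])
        subst this; exact G.irrefl hy
    -- case split on c = k - 1 or c = k + 1
    have hcc : c + 1 = k ∨ c = k + 1 := by omega
    rcases hcc with hcase | hcase
    · refine le_trans (Finset.card_le_card_of_injOn
        (fun y => (G.dist y u, G.dist y v))
        (t := {((0 : ℕ), k), (2, k - 2), (2, k - 1)}) ?_ ?_)
        (card_triple_le _ _ _)
      · intro y hy
        rcases key y hy with ⟨_, e1, e2⟩ | ⟨_, e1, e2, e3⟩ |
          ⟨f1, f2, f3, f4, f5, f6, f7, f8, f9, f10⟩ <;>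
          simp only [Finset.mem_coe, Finset.mem_insert, Finset.mem_singleton, Prod.mk.injEq] <;> omega
      · intro y _ z _ h
        simp only [Prod.mk.injEq] at h
        exact hinj y z h.1 h.2
    · refine le_trans (Finset.card_le_card_of_injOn
        (fun y => (G.dist y u, G.dist y v))
        (t := {((0 : ℕ), k), (2, k + 1), (2, k + 2)}) ?_ ?_)
        (card_triple_le _ _ _)
      · intro y hy
        rcases key y hy with ⟨_, e1, e2⟩ | ⟨_, e1, e2, e3⟩ |
          ⟨f1, f2, f3, f4, f5, f6, f7, f8, f9, f10⟩ <;>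
          simp only [Finset.mem_coe, Finset.mem_insert, Finset.mem_singleton, Prod.mk.injEq] <;> omega
      · intro y _ z _ h
        simp only [Prod.mk.injEq] at h
        exact hinj y z h.1 h.2

/-- if `{u,v}` is a WTR-set, every neighbor of `u` or `v` has degree ≤ 3. -/
theorem wtr_pair_neighbor_degree_le_three [Fintype V] [DecidableEq V]
    (G : SimpleGraph V) [DecidableRel G.Adj] (hG : G.Connected)
    (u v : V) (huv : u ≠ v) (hW : IsWTRSet G {u, v}) :
    ∀ x : V, (G.Adj u x ∨ G.Adj v x) → G.degree x ≤ 3 := by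
  intro x hx
  rcases hx with h | h
  · exact aux_wtr G hG u v huv hW x h
  · exact aux_wtr G hG v u huv.symm (by rwa [Finset.pair_comm]) x h
end

section
/- If {u,v} is a weak total resolving set for a connected graph G, then for any z adjacent to u and any r adjacent to z with r ≠ u, r is not adjacent to u; similarly with v in place of u. In other words, u and v lie on no triangle. -/
open SimpleGraph

variable {V : Type*}

lemma wtr_pair_no_triangle_aux [Fintype V] [DecidableEq V] (G : SimpleGraph V)
    (hG : G.Connected) (u v : V) (huv : u ≠ v) (hW : IsWTRSet G {u, v}) :
    ∀ z r : V, G.Adj u z → G.Adj z r → r ≠ u → ¬ G.Adj r u := by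
  intro z r huz hzr hru hradj
  have hmemu : u ∈ ({u, v} : Finset V) := by simp
  have hmemv : v ∈ ({u, v} : Finset V) := by simp
  have hzu : z ≠ u := fun h => G.irrefl (h ▸ huz.symm)
  by_cases hzv : z = v
  · -- triangle u v r
    subst hzv
    have hrz : r ≠ z := fun h => G.irrefl (h ▸ hzr)
    have hrW : r ∉ ({u, z} : Finset V) := by simp [hru, hrz]
    obtain ⟨w, hw, hwne, hd⟩ := hW.2 z hmemv r hrW
    have hwu : w = u := by
      rcases Finset.mem_insert.mp hw with h | h
      · exact h
      · exact absurd (Finset.mem_singleton.mp h) hwne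
    subst hwu
    apply hd
    rw [dist_eq_one_iff_adj.mpr hradj, dist_eq_one_iff_adj.mpr huz.symm]
  · by_cases hrv : r = v
    · subst hrv
      have hzW : z ∉ ({u, r} : Finset V) := by simp [hzu, hzv]
      obtain ⟨w, hw, hwne, hd⟩ := hW.2 r hmemv z hzW
      have hwu : w = u := by
        rcases Finset.mem_insert.mp hw with h | h
        · exact h
        · exact absurd (Finset.mem_singleton.mp h) hwne
      subst hwu
      apply hd
      rw [dist_eq_one_iff_adj.mpr huz.symm, dist_eq_one_iff_adj.mpr hradj]
    · -- z, r both outside W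
      have hzW : z ∉ ({u, v} : Finset V) := by simp [hzu, hzv]
      have hrW : r ∉ ({u, v} : Finset V) := by simp [hru, hrv]
      obtain ⟨w1, hw1, hw1ne, hd1⟩ := hW.2 u hmemu z hzW
      have hw1v : w1 = v := by
        rcases Finset.mem_insert.mp hw1 with h | h
        · exact absurd h hw1ne
        · exact Finset.mem_singleton.mp h
      rw [hw1v] at hd1
      obtain ⟨w2, hw2, hw2ne, hd2⟩ := hW.2 u hmemu r hrW
      have hw2v : w2 = v := by
        rcases Finset.mem_insert.mp hw2 with h | h
        · exact absurd h hw2ne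
        · exact Finset.mem_singleton.mp h
      rw [hw2v] at hd2
      have hzr' : z ≠ r := fun h => G.irrefl (h ▸ hzr)
      obtain ⟨w3, hw3, hd3⟩ := hW.1 z r hzr'
      have hzu1 : G.dist z u = 1 := dist_eq_one_iff_adj.mpr huz.symm
      have hru1 : G.dist r u = 1 := dist_eq_one_iff_adj.mpr hradj
      have hw3v : w3 = v := by
        rcases Finset.mem_insert.mp hw3 with h | h
        · subst h; rw [hzu1, hru1] at hd3; exact absurd rfl hd3
        · exact Finset.mem_singleton.mp h
      rw [hw3v] at hd3
      have hzr1 : G.dist z r = 1 := dist_eq_one_iff_adj.mpr hzr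
      have huz1 : G.dist u z = 1 := dist_eq_one_iff_adj.mpr huz
      have hrz1 : G.dist r z = 1 := dist_eq_one_iff_adj.mpr hzr.symm
      have hur1 : G.dist u r = 1 := dist_eq_one_iff_adj.mpr hradj.symm
      have t1 := hG.dist_triangle (u := z) (v := u) (w := v)
      have t2 := hG.dist_triangle (u := u) (v := z) (w := v)
      have t3 := hG.dist_triangle (u := r) (v := u) (w := v)
      have t4 := hG.dist_triangle (u := u) (v := r) (w := v)
      have t5 := hG.dist_triangle (u := z) (v := r) (w := v)
      have t6 := hG.dist_triangle (u := r) (v := z) (w := v)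
      rw [hzu1] at t1; rw [huz1] at t2; rw [hru1] at t3
      rw [hur1] at t4; rw [hzr1] at t5; rw [hrz1] at t6
      omega

/-- if `{u,v}` is a WTR-set, then `u` and `v` lie on no triangle. -/
theorem wtr_pair_no_triangle [Fintype V] [DecidableEq V] (G : SimpleGraph V)
    (hG : G.Connected) (u v : V) (huv : u ≠ v) (hW : IsWTRSet G {u, v}) :
    (∀ z r : V, G.Adj u z → G.Adj z r → r ≠ u → ¬ G.Adj r u) ∧
    (∀ z r : V, G.Adj v z → G.Adj z r → r ≠ v → ¬ G.Adj r v) := by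
  refine ⟨wtr_pair_no_triangle_aux G hG u v huv hW, ?_⟩
  have hW' : IsWTRSet G {v, u} := by rwa [Finset.pair_comm]
  exact wtr_pair_no_triangle_aux G hG v u huv.symm hW'
end

section
/- A connected graph G of order n ≥ 2 satisfies dim_wt(G) = n if and only if every vertex of G is a twin (i.e., for every vertex u there exists v ≠ u with N(u)−{v} = N(v)−{u}). -/
open SimpleGraph

variable {V : Type*}

lemma AreTwins.symm {G : SimpleGraph V} {u v : V} (h : AreTwins G u v) : AreTwins G v u :=
  ⟨h.1.symm, h.2.symm⟩

lemma dist_le_of_twins {G : SimpleGraph V} (hG : G.Connected) {v v' : V}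
    (h : AreTwins G v v') (w : V) (hwv : w ≠ v) (hwv' : w ≠ v') :
    G.dist v w ≤ G.dist v' w := by
  obtain ⟨p, hp⟩ := hG.exists_walk_length_eq_dist v' w
  cases p with
  | nil => exact absurd rfl hwv'.symm
  | cons hadj q =>
    rename_i x
    have hlen : q.length + 1 = G.dist v' w := by simpa using hp
    by_cases hx : x = v
    · subst hx
      have := G.dist_le q
      omega
    · have hmem : x ∈ G.neighborSet v' \ {v} := by
        simp only [Set.mem_diff, SimpleGraph.mem_neighborSet, Set.mem_singleton_iff]
        exact ⟨hadj, hx⟩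
      rw [← h.2] at hmem
      have hadj' : G.Adj v x := hmem.1
      have := G.dist_le (SimpleGraph.Walk.cons hadj' q)
      simp only [SimpleGraph.Walk.length_cons] at this
      omega

lemma twins_dist_eq {G : SimpleGraph V} (hG : G.Connected) {v v' : V}
    (h : AreTwins G v v') (w : V) (hwv : w ≠ v) (hwv' : w ≠ v') :
    G.dist v w = G.dist v' w :=
  le_antisymm (dist_le_of_twins hG h w hwv hwv') (dist_le_of_twins hG h.symm w hwv' hwv)

lemma twins_of_dist_eq {G : SimpleGraph V} {v v' : V} (hne : v ≠ v')
    (h : ∀ w : V, w ≠ v → w ≠ v' → G.dist v w = G.dist v' w) : AreTwins G v v' := by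
  refine ⟨hne, ?_⟩
  ext x
  simp only [Set.mem_diff, SimpleGraph.mem_neighborSet, Set.mem_singleton_iff]
  constructor
  · rintro ⟨hadj, hxv'⟩
    have hxv : x ≠ v := fun hh => G.irrefl (hh ▸ hadj)
    have := h x hxv hxv'
    rw [G.dist_comm (u := v) (v := x), G.dist_comm (u := v') (v := x)] at this
    have h1 : G.dist v x = 1 := (dist_eq_one_iff_adj (G := G)).2 hadj
    refine ⟨(dist_eq_one_iff_adj (G := G)).1 ?_, hxv⟩
    rw [SimpleGraph.dist_comm, ← this, SimpleGraph.dist_comm]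
    exact h1
  · rintro ⟨hadj, hxv⟩
    have hxv' : x ≠ v' := fun hh => G.irrefl (hh ▸ hadj)
    have := h x hxv hxv'
    rw [G.dist_comm (u := v) (v := x), G.dist_comm (u := v') (v := x)] at this
    have h1 : G.dist v' x = 1 := (dist_eq_one_iff_adj (G := G)).2 hadj
    refine ⟨(dist_eq_one_iff_adj (G := G)).1 ?_, hxv'⟩
    rw [SimpleGraph.dist_comm, this, SimpleGraph.dist_comm]
    exact h1

/-- `dim_wt(G) = n` iff every vertex of `G` is a twin. -/
theorem wtDim_eq_card_iff_all_twins [Fintype V] (G : SimpleGraph V) (hG : G.Connected)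
    (hn : 2 ≤ Fintype.card V) :
    wtDim G = Fintype.card V ↔ ∀ u : V, ∃ v : V, AreTwins G u v := by
  classical
  have huniv : IsWTRSet G (Finset.univ : Finset V) := by
    refine ⟨fun u v huv => ⟨u, Finset.mem_univ u, ?_⟩, fun v _ u hu => absurd (Finset.mem_univ u) hu⟩
    rw [G.dist_self]
    intro hh
    exact (hG.pos_dist_of_ne (G := G) huv.symm).ne' (by rw [G.dist_comm (u := v) (v := u)] at hh ⊢; omega)
  have hmem : Fintype.card V ∈ {k | ∃ W : Finset V, W.card = k ∧ IsWTRSet G W} :=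
    ⟨Finset.univ, Finset.card_univ, huniv⟩
  constructor
  · intro hdim u
    by_contra hno
    push_neg at hno
    -- W = univ \ {u} is a WTR set of card n - 1
    set W : Finset V := Finset.univ.erase u with hW
    have hWcard : W.card = Fintype.card V - 1 := by
      rw [hW, Finset.card_erase_of_mem (Finset.mem_univ u), Finset.card_univ]
    have hWres : IsResolvingSet G W := by
      intro a b hab
      by_cases ha : a = u
      · refine ⟨b, Finset.mem_erase.2 ⟨fun hh => hab (ha.trans hh.symm), Finset.mem_univ b⟩, ?_⟩
        rw [G.dist_self]
        exact fun hh => (hG.pos_dist_of_ne (G := G) hab).ne' hh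
      · refine ⟨a, Finset.mem_erase.2 ⟨ha, Finset.mem_univ a⟩, ?_⟩
        rw [G.dist_self]
        intro hh
        exact (hG.pos_dist_of_ne (G := G) hab.symm).ne' (by rw [G.dist_comm (u := b) (v := a)] at hh ⊢; omega)
    have hWwtr : IsWTRSet G W := by
      refine ⟨hWres, fun v hv x hx => ?_⟩
      have hxu : x = u := by
        by_contra hh
        exact hx (Finset.mem_erase.2 ⟨hh, Finset.mem_univ x⟩)
      subst hxu
      have hvu : v ≠ x := (Finset.mem_erase.1 hv).1
      have hnt : ¬ AreTwins G x v := hno v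
      have : ¬ ∀ w : V, w ≠ x → w ≠ v → G.dist x w = G.dist v w := by
        intro hall
        exact hnt (twins_of_dist_eq hvu.symm hall)
      push_neg at this
      obtain ⟨w, hwx, hwv, hd⟩ := this
      exact ⟨w, Finset.mem_erase.2 ⟨hwx, Finset.mem_univ w⟩, hwv, hd⟩
    have hle : wtDim G ≤ Fintype.card V - 1 := Nat.sInf_le ⟨W, hWcard, hWwtr⟩
    omega
  · intro htw
    refine le_antisymm (Nat.sInf_le hmem) ?_
    by_contra hlt
    push_neg at hlt
    have hinf : wtDim G ∈ {k | ∃ W : Finset V, W.card = k ∧ IsWTRSet G W} :=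
      Nat.sInf_mem ⟨_, hmem⟩
    obtain ⟨W, hWcard, hWres, hWtot⟩ := hinf
    have hWlt : W.card < Fintype.card V := hWcard ▸ hlt
    have : ∃ v : V, v ∉ W := by
      by_contra hh
      push_neg at hh
      rw [Finset.eq_univ_iff_forall.2 hh, Finset.card_univ] at hWlt
      omega
    obtain ⟨v, hv⟩ := this
    obtain ⟨v', htwin⟩ := htw v
    by_cases hv' : v' ∈ W
    · obtain ⟨w, hwW, hwne, hd⟩ := hWtot v' hv' v hv
      have hwv : w ≠ v := fun hh => hv (hh ▸ hwW)
      exact hd (twins_dist_eq hG htwin w hwv hwne)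
    · obtain ⟨w, hwW, hd⟩ := hWres v v' htwin.1
      have hwv : w ≠ v := fun hh => hv (hh ▸ hwW)
      have hwv' : w ≠ v' := fun hh => hv' (hh ▸ hwW)
      exact hd (twins_dist_eq hG htwin w hwv hwv')
end

section
/- For any connected graph G of order n ≥ 3, the weak total resolving number satisfies res_wt(G) ≥ 3; that is, there exists a 2-element subset of V(G) which is not a weak total resolving set. -/
open SimpleGraph

variable {V : Type*}

lemma aux_walk (G : SimpleGraph V) (a b : V) :
    ∀ {c : V}, G.Walk c a → c ≠ a → c ≠ b →
      ∃ u, u ≠ a ∧ u ≠ b ∧ (G.Adj u a ∨ G.Adj u b) := by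
  intro c p
  induction p with
  | nil => intro h _; exact absurd rfl h
  | @cons c d a h p ih =>
    intro hca hcb
    by_cases hadj : G.Adj c a ∨ G.Adj c b
    · exact ⟨c, hca, hcb, hadj⟩
    · push_neg at hadj
      have hda : d ≠ a := fun e => hadj.1 (e ▸ h)
      have hdb : d ≠ b := fun e => hadj.2 (e ▸ h)
      exact ih hda hdb

lemma bad_two_set [Fintype V] (G : SimpleGraph V) (hG : G.Connected)
    (hn : 3 ≤ Fintype.card V) :
    ∃ W : Finset V, W.card = 2 ∧ ¬ IsWTRSet G W := by
  classical
  -- find an edge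
  have h2 : 1 < Fintype.card V := by omega
  obtain ⟨x, y, hxy⟩ := Fintype.exists_pair_of_one_lt_card h2
  obtain ⟨p⟩ := hG x y
  obtain ⟨a, b, hab⟩ : ∃ a b, G.Adj a b := by
    cases p with
    | nil => exact absurd rfl hxy
    | cons h _ => exact ⟨_, _, h⟩
  have hne : a ≠ b := hab.ne
  -- find c outside {a,b}
  obtain ⟨c, hca, hcb⟩ : ∃ c : V, c ≠ a ∧ c ≠ b := by
    by_contra hcon
    push_neg at hcon
    have hsub : (Finset.univ : Finset V) ⊆ {a, b} := by
      intro z _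
      rcases Classical.em (z = a) with h | h
      · simp [h]
      · simp [hcon z h]
    have := Finset.card_le_card hsub
    have hle : ({a, b} : Finset V).card ≤ 2 :=
      (Finset.card_insert_le _ _).trans (by simp)
    simp [Finset.card_univ] at this
    omega
  -- find neighbor of a or b outside {a,b}
  obtain ⟨q⟩ := hG c a
  obtain ⟨u, hua, hub, hadj⟩ := aux_walk G a b q hca hcb
  refine ⟨{a, b}, ?_, ?_⟩
  · rw [Finset.card_insert_of_notMem (by simpa using hne), Finset.card_singleton]
  · rintro ⟨-, hW⟩
    have huW : u ∉ ({a, b} : Finset V) := by simp [hua, hub]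
    rcases hadj with h | h
    · -- u ~ a, contradict with v = b
      obtain ⟨w, hwW, hwb, hd⟩ := hW b (by simp) u huW
      have hw : w = a := by
        simp only [Finset.mem_insert, Finset.mem_singleton] at hwW
        tauto
      subst hw
      apply hd
      rw [(dist_eq_one_iff_adj).mpr h, (dist_eq_one_iff_adj).mpr hab.symm]
    · -- u ~ b, contradict with v = a
      obtain ⟨w, hwW, hwa, hd⟩ := hW a (by simp) u huW
      have hw : w = b := by
        simp only [Finset.mem_insert, Finset.mem_singleton] at hwW
        tauto
      subst hw
      apply hd
      rw [(dist_eq_one_iff_adj).mpr h, (dist_eq_one_iff_adj).mpr hab]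

lemma univ_wtr [Fintype V] (G : SimpleGraph V) (hG : G.Connected) :
    IsWTRSet G (Finset.univ : Finset V) := by
  constructor
  · intro u v huv
    refine ⟨u, Finset.mem_univ _, ?_⟩
    rw [SimpleGraph.dist_self]
    exact Ne.symm (Nat.pos_of_ne_zero (fun h => huv ((hG v u).dist_eq_zero_iff.mp h).symm)).ne'
  · intro v _ u hu
    exact absurd (Finset.mem_univ u) hu

/-- for any connected graph of order `n ≥ 3`, `res_wt(G) ≥ 3`;
that is, some 2-element set of vertices is not a WTR-set. -/
theorem resWt_ge_three [Fintype V] (G : SimpleGraph V) (hG : G.Connected)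
    (hn : 3 ≤ Fintype.card V) :
    3 ≤ resWt G ∧ ∃ W : Finset V, W.card = 2 ∧ ¬ IsWTRSet G W := by
  classical
  obtain ⟨W2, hW2card, hW2⟩ := bad_two_set G hG hn
  refine ⟨?_, W2, hW2card, hW2⟩
  have hnonempty : (Fintype.card V) ∈ {r | ∀ W : Finset V, W.card = r → IsWTRSet G W} := by
    intro W hW
    have : W = Finset.univ := Finset.eq_univ_of_card _ (by simp [hW, Finset.card_univ])
    rw [this]
    exact univ_wtr G hG
  apply le_csInf ⟨_, hnonempty⟩
  intro r hr
  by_contra hlt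
  push_neg at hlt
  interval_cases r
  · -- r = 0 : empty set is WTR, but not resolving
    have h := hr ∅ rfl
    have h2 : 1 < Fintype.card V := by omega
    obtain ⟨x, y, hxy⟩ := Fintype.exists_pair_of_one_lt_card h2
    obtain ⟨w, hw, -⟩ := h.1 x y hxy
    exact absurd hw (Finset.notMem_empty w)
  · -- r = 1
    have h2 : 1 < Fintype.card V := by omega
    obtain ⟨x, y, hxy⟩ := Fintype.exists_pair_of_one_lt_card h2
    have h := hr {x} (Finset.card_singleton x)
    obtain ⟨w, hw, hwx, -⟩ := h.2 x (Finset.mem_singleton_self x) y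
      (by simpa using Ne.symm hxy)
    exact hwx (Finset.mem_singleton.mp hw)
  · -- r = 2
    exact hW2 (hr W2 hW2card)
end

section
/- Let G be a connected graph of order n ≥ 3. Every (n−1)-element subset of V(G) is a weak total resolving set if and only if G contains no twin vertices. Equivalently, res_wt(G) = n if and only if G contains a pair of twin vertices. -/
open SimpleGraph

variable {V : Type*}

lemma twin_dist_le (G : SimpleGraph V) (hG : G.Connected) {u v : V}
    (hN : G.neighborSet u \ {v} = G.neighborSet v \ {u}) {w : V} (hvw : v ≠ w) :
    G.dist u w ≤ G.dist v w := by
  obtain ⟨p, hp⟩ := hG.exists_walk_length_eq_dist v w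
  cases p with
  | nil => exact absurd rfl hvw
  | cons h q =>
    rename_i x
    by_cases hx : x = u
    · subst hx
      have := G.dist_le q
      simp [SimpleGraph.Walk.length_cons] at hp
      omega
    · have hmem : x ∈ G.neighborSet v \ {u} := ⟨h, hx⟩
      rw [← hN] at hmem
      have hadj : G.Adj u x := hmem.1
      have := G.dist_le (SimpleGraph.Walk.cons hadj q)
      simp [SimpleGraph.Walk.length_cons] at hp this
      omega

lemma twins_dist (G : SimpleGraph V) (hG : G.Connected) {u v : V}
    (h : AreTwins G u v) {w : V} (hwu : w ≠ u) (hwv : w ≠ v) :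
    G.dist u w = G.dist v w :=
  le_antisymm (twin_dist_le G hG h.2 (Ne.symm hwv))
    (twin_dist_le G hG h.2.symm (Ne.symm hwu))

/-- Any `(n-1)`-subset is WTR when there are no twins. -/
lemma wtr_of_no_twins [Fintype V] (G : SimpleGraph V) (hG : G.Connected)
    (htw : ¬ ∃ u v : V, AreTwins G u v) (W : Finset V)
    (hW : W.card = Fintype.card V - 1) (hn : 3 ≤ Fintype.card V) : IsWTRSet G W := by
  classical
  have hcompl : Wᶜ.card = 1 := by
    have := Finset.card_compl W
    omega
  obtain ⟨v0, hv0⟩ := Finset.card_eq_one.mp hcompl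
  have hmemW : ∀ x : V, x ∉ W ↔ x = v0 := by
    intro x
    rw [← Finset.mem_compl, hv0, Finset.mem_singleton]
  constructor
  · intro a b hab
    by_cases ha : a ∈ W
    · exact ⟨a, ha, by
        simp only [SimpleGraph.dist_self]
        exact ((hG.pos_dist_of_ne (Ne.symm hab)).ne').symm⟩
    · have hb : b ∈ W := by
        by_contra hb
        exact hab (((hmemW a).mp ha).trans ((hmemW b).mp hb).symm)
      exact ⟨b, hb, by
        simp only [SimpleGraph.dist_self]
        exact (hG.pos_dist_of_ne hab).ne'⟩
  · intro x hx u hu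
    have hu0 : u = v0 := (hmemW u).mp hu
    subst hu0
    have hxv0 : x ≠ u := fun h => ((hmemW x).mpr h).elim hx
    have hnotw : ¬ AreTwins G x u := fun h => htw ⟨x, u, h⟩
    have hNne : G.neighborSet x \ {u} ≠ G.neighborSet u \ {x} := by
      intro h; exact hnotw ⟨hxv0, h⟩
    have : ∃ y, ¬ (y ∈ G.neighborSet x \ {u} ↔ y ∈ G.neighborSet u \ {x}) := by
      by_contra h
      push_neg at h
      exact hNne (Set.ext fun y => h y)
    obtain ⟨y, hy⟩ := this
    have hy' : (y ∈ G.neighborSet x \ {u} ∧ y ∉ G.neighborSet u \ {x}) ∨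
        (y ∈ G.neighborSet u \ {x} ∧ y ∉ G.neighborSet x \ {u}) := by
      by_cases h1 : y ∈ G.neighborSet x \ {u}
      · exact Or.inl ⟨h1, fun h2 => hy ⟨fun _ => h2, fun _ => h1⟩⟩
      · refine Or.inr ⟨?_, h1⟩
        by_contra h2
        exact hy ⟨fun a => absurd a h1, fun b => absurd b h2⟩
    rcases hy' with ⟨hy1, hy2⟩ | ⟨hy1, hy2⟩
    · -- y adjacent to x, not to u
      obtain ⟨hadj, hyv0⟩ := hy1
      have hyv0' : y ≠ u := hyv0
      have hyx : y ≠ x := fun h => G.irrefl (h ▸ hadj)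
      have hyW : y ∈ W := by by_contra hc; exact hyv0' ((hmemW y).mp hc)
      refine ⟨y, hyW, hyx, ?_⟩
      have hd1 : G.dist x y = 1 := SimpleGraph.dist_eq_one_iff_adj.mpr hadj
      have hnadj : ¬ G.Adj u y := by
        intro h
        exact hy2 ⟨h, hyx⟩
      have : G.dist u y ≠ 1 := fun h => hnadj (SimpleGraph.dist_eq_one_iff_adj.mp h)
      omega
    · -- y adjacent to u, not to x
      obtain ⟨hadj, hyx⟩ := hy1
      have hyx' : y ≠ x := hyx
      have hyv0 : y ≠ u := fun h => G.irrefl (h ▸ hadj)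
      have hyW : y ∈ W := by by_contra hc; exact hyv0 ((hmemW y).mp hc)
      refine ⟨y, hyW, hyx', ?_⟩
      have hd1 : G.dist u y = 1 := SimpleGraph.dist_eq_one_iff_adj.mpr hadj
      have hnadj : ¬ G.Adj x y := by
        intro h
        exact hy2 ⟨h, hyv0⟩
      have : G.dist x y ≠ 1 := fun h => hnadj (SimpleGraph.dist_eq_one_iff_adj.mp h)
      omega

/-- every `(n-1)`-subset is a WTR-set iff `G` has no twins; equivalently,
`res_wt(G) = n` iff `G` contains a pair of twins. -/
theorem resWt_eq_card_iff_twins [Fintype V] (G : SimpleGraph V) (hG : G.Connected)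
    (hn : 3 ≤ Fintype.card V) :
    ((∀ W : Finset V, W.card = Fintype.card V - 1 → IsWTRSet G W) ↔
      ¬ ∃ u v : V, AreTwins G u v) ∧
    (resWt G = Fintype.card V ↔ ∃ u v : V, AreTwins G u v) := by
  classical
  set n := Fintype.card V with hncard
  -- no twins failure lemma: if twins u v and u ∈ W, v ∉ W then W is not WTR
  have key : ∀ (u v : V), AreTwins G u v → ∀ W : Finset V, u ∈ W → v ∉ W → ¬ IsWTRSet G W := by
    intro u v htw W huW hvW hW
    obtain ⟨w, hwW, hwu, hd⟩ := hW.2 u huW v hvW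
    have hwv : w ≠ v := fun h => hvW (h ▸ hwW)
    exact hd ((twins_dist G hG htw hwu hwv).symm)
  have part1 : (∀ W : Finset V, W.card = n - 1 → IsWTRSet G W) ↔ ¬ ∃ u v : V, AreTwins G u v := by
    constructor
    · rintro hall ⟨u, v, htw⟩
      have hcard : (Finset.univ.erase v).card = n - 1 := by
        rw [Finset.card_erase_of_mem (Finset.mem_univ v), Finset.card_univ, ← hncard]
      exact key u v htw _ (Finset.mem_erase.mpr ⟨htw.1, Finset.mem_univ u⟩)
        (by simp) (hall _ hcard)
    · intro htw W hW
      exact wtr_of_no_twins G hG htw W hW hn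
  refine ⟨part1, ?_⟩
  -- n is always in the set
  have hnS : n ∈ {r | ∀ W : Finset V, W.card = r → IsWTRSet G W} := by
    intro W hWcard
    have hWuniv : W = Finset.univ := Finset.eq_univ_of_card W hWcard
    constructor
    · intro a b hab
      refine ⟨a, by simp [hWuniv], ?_⟩
      rw [SimpleGraph.dist_self]
      exact ((hG.pos_dist_of_ne (Ne.symm hab)).ne').symm
    · intro x hx u hu
      exact absurd (by simp [hWuniv] : u ∈ W) hu
  constructor
  · -- resWt = n → twins
    intro hres
    by_contra htw
    have hmem : n - 1 ∈ {r | ∀ W : Finset V, W.card = r → IsWTRSet G W} :=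
      fun W hW => wtr_of_no_twins G hG htw W hW hn
    have := Nat.sInf_le hmem
    rw [resWt] at hres
    omega
  · -- twins → resWt = n
    rintro ⟨u, v, htw⟩
    rw [resWt]
    refine le_antisymm (Nat.sInf_le hnS) (le_csInf ⟨n, hnS⟩ ?_)
    intro r hr
    by_contra hlt
    push_neg at hlt
    rcases Nat.eq_zero_or_pos r with hr0 | hrpos
    · subst hr0
      have := (hr ∅ rfl).1
      obtain ⟨a, b, hab⟩ := Fintype.exists_pair_of_one_lt_card (α := V) (by omega)
      obtain ⟨w, hw, -⟩ := this a b hab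
      exact absurd hw (Finset.notMem_empty w)
    · -- build W of card r with u ∈ W, v ∉ W
      have hcard2 : ((Finset.univ.erase v).erase u).card = n - 2 := by
        rw [Finset.card_erase_of_mem (Finset.mem_erase.mpr ⟨htw.1, Finset.mem_univ u⟩),
          Finset.card_erase_of_mem (Finset.mem_univ v), Finset.card_univ, ← hncard]
        omega
      obtain ⟨t, hts, htcard⟩ := Finset.exists_subset_card_eq
        (show r - 1 ≤ ((Finset.univ.erase v).erase u).card by omega)
      have hut : u ∉ t := fun h => (Finset.mem_erase.mp (hts h)).1 rfl
      have hvt : v ∉ t := fun h => (Finset.mem_erase.mp (Finset.mem_erase.mp (hts h)).2).1 rfl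
      set W := insert u t with hWdef
      have hWcard : W.card = r := by
        rw [hWdef, Finset.card_insert_of_notMem hut, htcard]; omega
      have hvW : v ∉ W := by
        rw [hWdef, Finset.mem_insert]
        push_neg
        exact ⟨Ne.symm htw.1, hvt⟩
      exact key u v htw W (Finset.mem_insert_self u t) hvW (hr W hWcard)
end

section
/- If every k-element subset of V(G) is a weak total resolving set for a connected graph G (i.e., res_wt(G) ≤ k), then every two vertices of G have at most k−2 common neighbors. -/
open SimpleGraph

variable {V : Type*}

/-- if every `k`-subset of vertices is a WTR-set, then any two distinct
vertices have at most `k - 2` common neighbors. -/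
theorem common_neighbors_le [Fintype V] [DecidableEq V] (G : SimpleGraph V)
    [DecidableRel G.Adj] (hG : G.Connected) (k : ℕ)
    (h : ∀ W : Finset V, W.card = k → IsWTRSet G W) :
    ∀ u v : V, u ≠ v → (G.neighborFinset u ∩ G.neighborFinset v).card ≤ k - 2 := by
  intro u v huv
  set S := G.neighborFinset u ∩ G.neighborFinset v with hS
  by_contra hcard
  push_neg at hcard
  rcases Nat.eq_zero_or_pos k with hk | hk
  · subst hk
    obtain ⟨w, hw, -⟩ := (h ∅ rfl).1 u v huv
    exact absurd hw (Finset.notMem_empty w)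
  · -- pick T ⊆ S with card k - 1
    have hk1 : k - 1 ≤ S.card := by omega
    obtain ⟨T, hTS, hTcard⟩ := Finset.exists_subset_card_eq hk1
    have huS : u ∉ S := by
      simp [hS, Finset.mem_inter]
    have hvS : v ∉ S := by
      simp [hS, Finset.mem_inter]
    have huT : u ∉ T := fun hh => huS (hTS hh)
    have hvT : v ∉ T := fun hh => hvS (hTS hh)
    set W := insert u T with hW
    have hWcard : W.card = k := by
      rw [hW, Finset.card_insert_of_notMem huT, hTcard]; omega
    have hvW : v ∉ W := by
      simp [hW, Finset.mem_insert, huv.symm, hvT]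
    obtain ⟨w, hwW, hwu, hwd⟩ := (h W hWcard).2 u (Finset.mem_insert_self u T) v hvW
    have hwT : w ∈ T := by
      rcases Finset.mem_insert.1 hwW with hh | hh
      · exact absurd hh hwu
      · exact hh
    have hwS := hTS hwT
    rw [hS, Finset.mem_inter, G.mem_neighborFinset, G.mem_neighborFinset] at hwS
    apply hwd
    have h1 : G.dist v w = 1 := dist_eq_one_iff_adj.2 hwS.2
    have h2 : G.dist u w = 1 := dist_eq_one_iff_adj.2 hwS.1
    rw [h1, h2]
end

section
/- For a connected graph G of order n ≥ 3, every 3-element subset of V(G) is a weak total resolving set if and only if G is an odd cycle or a path on at least three vertices. Equivalently, res_wt(G) = 3 if and only if G is an odd cycle or a path of order ≥ 3. -/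
open SimpleGraph

variable {V : Type*}

/-- every 2-set resolves every pair of vertices outside it -/
def TwoRes (G : SimpleGraph V) : Prop :=
  ∀ x y u v : V, x ≠ y → u ≠ v → u ≠ x → u ≠ y → v ≠ x → v ≠ y →
    (G.dist u x ≠ G.dist v x ∨ G.dist u y ≠ G.dist v y)

theorem three_iff (G : SimpleGraph V) (hG : G.Connected) :
    (∀ W : Finset V, W.card = 3 → IsWTRSet G W) ↔ TwoRes G := by
  classical
  constructor
  · intro h x y u v hxy huv hux huy hvx hvy
    have hcard : ({v, x, y} : Finset V).card = 3 := by
      rw [Finset.card_insert_of_notMem (by simp [hvx, hvy]),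
        Finset.card_insert_of_notMem (by simp [hxy]), Finset.card_singleton]
    obtain ⟨-, h2⟩ := h _ hcard
    obtain ⟨w, hwW, hwv, hwd⟩ := h2 v (by simp) u (by simp [huv, hux, huy])
    rcases (by simpa using hwW : w = v ∨ w = x ∨ w = y) with rfl | rfl | rfl
    · exact absurd rfl hwv
    · exact Or.inl hwd
    · exact Or.inr hwd
  · intro hP W hW
    obtain ⟨a, b, c, hab, hac, hbc, rfl⟩ := Finset.card_eq_three.mp hW
    have hmem : ∀ z, z ∈ ({a, b, c} : Finset V) ↔ z = a ∨ z = b ∨ z = c := by simp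
    have hres : IsResolvingSet G {a, b, c} := by
      intro u v huv
      by_cases huW : u ∈ ({a, b, c} : Finset V)
      · exact ⟨u, huW, by
          rw [G.dist_self]
          exact (hG.pos_dist_of_ne (Ne.symm huv)).ne⟩
      · by_cases hvW : v ∈ ({a, b, c} : Finset V)
        · exact ⟨v, hvW, by
            rw [G.dist_self]
            exact (hG.pos_dist_of_ne huv).ne'⟩
        · simp only [hmem, not_or] at huW hvW
          rcases hP a b u v hab huv huW.1 huW.2.1 hvW.1 hvW.2.1 with h | h
          · exact ⟨a, by simp, h⟩
          · exact ⟨b, by simp, h⟩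
    refine ⟨hres, ?_⟩
    intro v hv u hu
    simp only [hmem, not_or] at hu
    rcases (hmem v).mp hv with rfl | rfl | rfl
    · rcases hP b c u v hbc hu.1 hu.2.1 hu.2.2 hab hac with h | h
      · exact ⟨b, by simp, Ne.symm hab, h⟩
      · exact ⟨c, by simp, Ne.symm hac, h⟩
    · rcases hP a c u v hac hu.2.1 hu.1 hu.2.2 hab.symm hbc with h | h
      · exact ⟨a, by simp, hab, h⟩
      · exact ⟨c, by simp, Ne.symm hbc, h⟩
    · rcases hP a b u v hab hu.2.2 hu.1 hu.2.1 hac.symm hbc.symm with h | h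
      · exact ⟨a, by simp, hac, h⟩
      · exact ⟨b, by simp, hbc, h⟩


theorem dist_le_two_of_adj {G : SimpleGraph V} (hG : G.Connected) {a v b : V}
    (h1 : G.Adj v a) (h2 : G.Adj v b) : G.dist a b ≤ 2 := by
  calc G.dist a b ≤ G.dist a v + G.dist v b := hG.dist_triangle
  _ ≤ 2 := by
      rw [SimpleGraph.dist_comm (u := a) (v := v), (SimpleGraph.dist_eq_one_iff_adj).mpr h1,
        (SimpleGraph.dist_eq_one_iff_adj).mpr h2]

/-- no vertex has three distinct neighbors -/
theorem degle2 {G : SimpleGraph V} (hG : G.Connected)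
    (hP : ∀ x y u v : V, x ≠ y → u ≠ v → u ≠ x → u ≠ y → v ≠ x → v ≠ y →
      (G.dist u x ≠ G.dist v x ∨ G.dist u y ≠ G.dist v y))
    {v a b c : V} (ha : G.Adj v a) (hb : G.Adj v b) (hc : G.Adj v c) :
    a = b ∨ a = c ∨ b = c := by
  by_contra hcon
  push_neg at hcon
  obtain ⟨hab, hac, hbc⟩ := hcon
  have d1 : G.dist a v = 1 := by
    rw [SimpleGraph.dist_comm]; exact dist_eq_one_iff_adj.mpr ha
  have d2 : G.dist b v = 1 := by
    rw [SimpleGraph.dist_comm]; exact dist_eq_one_iff_adj.mpr hb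
  have d3 : G.dist c v = 1 := by
    rw [SimpleGraph.dist_comm]; exact dist_eq_one_iff_adj.mpr hc
  have e1 : G.dist a c ≠ G.dist b c := by
    rcases hP v c a b hc.ne hab ha.ne' hac hb.ne' hbc with h | h
    · rw [d1, d2] at h; exact absurd rfl h
    · exact h
  have e2 : G.dist b a ≠ G.dist c a := by
    rcases hP v a b c ha.ne hbc hb.ne' hab.symm hc.ne' hac.symm with h | h
    · rw [d2, d3] at h; exact absurd rfl h
    · exact h
  have e3 : G.dist a b ≠ G.dist c b := by
    rcases hP v b a c hb.ne hac ha.ne' hab hc.ne' hbc.symm with h | h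
    · rw [d1, d3] at h; exact absurd rfl h
    · exact h
  have c1 : G.dist b a = G.dist a b := SimpleGraph.dist_comm
  have c2 : G.dist c a = G.dist a c := SimpleGraph.dist_comm
  have c3 : G.dist c b = G.dist b c := SimpleGraph.dist_comm
  have p1 : 1 ≤ G.dist a b := hG.pos_dist_of_ne hab
  have p2 : 1 ≤ G.dist a c := hG.pos_dist_of_ne hac
  have p3 : 1 ≤ G.dist b c := hG.pos_dist_of_ne hbc
  have q1 : G.dist a b ≤ 2 := dist_le_two_of_adj hG ha hb
  have q2 : G.dist a c ≤ 2 := dist_le_two_of_adj hG ha hc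
  have q3 : G.dist b c ≤ 2 := dist_le_two_of_adj hG hb hc
  omega

theorem exists_nbr {G : SimpleGraph V} (hG : G.Connected) {x y : V} (hxy : x ≠ y) :
    ∃ a, G.Adj x a := by
  obtain ⟨w⟩ := hG.preconnected x y
  cases w with
  | nil => exact absurd rfl hxy
  | cons h _ => exact ⟨_, h⟩

theorem walk_end_cases {G : SimpleGraph V}
    (hone : ∀ z c d : V, G.Adj z c → G.Adj z d → c = d) :
    ∀ {x y : V} (_ : G.Walk x y), y = x ∨ G.Adj x y := by
  intro x y w
  induction w with
  | nil => exact Or.inl rfl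
  | @cons a c y h q ih =>
    rcases ih with rfl | h2
    · exact Or.inr h
    · exact Or.inl (hone c a y h.symm h2).symm

/-- some vertex has two distinct neighbors -/
theorem exists_two_nbrs [Fintype V] {G : SimpleGraph V} (hG : G.Connected)
    (hn : 3 ≤ Fintype.card V) :
    ∃ y a b, a ≠ b ∧ G.Adj y a ∧ G.Adj y b := by
  classical
  by_contra hcon
  push_neg at hcon
  have hone : ∀ z c d : V, G.Adj z c → G.Adj z d → c = d := by
    intro z c d h1 h2
    by_contra hne
    exact hcon z c d hne h1 h2
  obtain ⟨x, y, hxy⟩ := Fintype.exists_pair_of_one_lt_card (α := V) (by omega)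
  obtain ⟨a, hua⟩ := exists_nbr hG hxy
  obtain ⟨z, hz⟩ : ∃ z : V, z ∉ ({x, a} : Finset V) := by
    by_contra h
    push_neg at h
    have hsub : (Finset.univ : Finset V) ⊆ {x, a} := fun z _ => h z
    have h2 := (Finset.card_le_card hsub).trans (Finset.card_insert_le x {a})
    rw [Finset.card_univ, Finset.card_singleton] at h2
    omega
  simp only [Finset.mem_insert, Finset.mem_singleton, not_or] at hz
  have hzx : G.Adj z x := by
    rcases walk_end_cases hone (hG.preconnected z x).some with h | h
    · exact absurd h.symm hz.1
    · exact h
  have hza : G.Adj z a := by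
    rcases walk_end_cases hone (hG.preconnected z a).some with h | h
    · exact absurd h.symm hz.2
    · exact h
  exact absurd (hone z x a hzx hza) (G.ne_of_adj hua)


theorem exists_pred {G : SimpleGraph V} (hG : G.Connected) {x u : V} {k : ℕ}
    (h : G.dist x u = k + 1) : ∃ w, G.Adj w u ∧ G.dist x w = k := by
  obtain ⟨p, hp⟩ := (hG.preconnected x u).exists_walk_length_eq_dist
  have hq : p.reverse.length = k + 1 := by rw [SimpleGraph.Walk.length_reverse, hp, h]
  obtain ⟨w, hadj, r, hr⟩ : ∃ w, ∃ _ : G.Adj u w, ∃ r : G.Walk w x, r.length = k := by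
    cases hq2 : p.reverse with
    | nil => rw [hq2] at hq; simp at hq
    | cons hadj r =>
      rw [hq2] at hq
      simp only [SimpleGraph.Walk.length_cons] at hq
      exact ⟨_, hadj, r, by omega⟩
  refine ⟨w, hadj.symm, le_antisymm ?_ ?_⟩
  · rw [SimpleGraph.dist_comm]
    exact hr ▸ SimpleGraph.dist_le r
  · have htri : G.dist x u ≤ G.dist x w + G.dist w u := hG.dist_triangle
    rw [SimpleGraph.dist_eq_one_iff_adj.mpr hadj.symm, h] at htri
    omega

theorem dist_inj_of_unique_nbr {G : SimpleGraph V} (hG : G.Connected)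
    (hdeg : ∀ z a b c : V, G.Adj z a → G.Adj z b → G.Adj z c → a = b ∨ a = c ∨ b = c)
    {x a : V} (hxa : G.Adj x a) (huniq : ∀ b, G.Adj x b → b = a) :
    ∀ k u v, G.dist x u = k → G.dist x v = k → u = v := by
  intro k
  induction k using Nat.strong_induction_on with
  | _ k ih =>
    match k with
    | 0 =>
      intro u v hu hv
      have h1 : x = u := (hG.dist_eq_zero_iff).mp hu
      have h2 : x = v := (hG.dist_eq_zero_iff).mp hv
      rw [← h1, ← h2]
    | 1 =>
      intro u v hu hv
      rw [SimpleGraph.dist_eq_one_iff_adj] at hu hv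
      rw [huniq u hu, huniq v hv]
    | (k + 2) =>
      intro u v hu hv
      obtain ⟨wu, hwu, hwud⟩ := exists_pred hG hu
      obtain ⟨wv, hwv, hwvd⟩ := exists_pred hG hv
      have hw : wu = wv := ih (k + 1) (by omega) wu wv hwud hwvd
      subst hw
      obtain ⟨z, hz, hzd⟩ := exists_pred hG hwud
      have huz : u ≠ z := by
        rintro rfl; rw [hu] at hzd; omega
      have hvz : v ≠ z := by
        rintro rfl; rw [hv] at hzd; omega
      rcases hdeg wu u v z hwu hwv hz.symm with h | h | h
      · exact h
      · exact absurd h huz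
      · exact absurd h hvz

theorem dist_lt_card [Fintype V] {G : SimpleGraph V} (hG : G.Connected) (x u : V) :
    G.dist x u < Fintype.card V := by
  obtain ⟨p, hp, hl⟩ := hG.exists_path_of_dist x u
  classical
  exact hl ▸ hp.length_lt

theorem iso_path_of_endpoint [Fintype V] {G : SimpleGraph V} (hG : G.Connected)
    (hdeg : ∀ z a b c : V, G.Adj z a → G.Adj z b → G.Adj z c → a = b ∨ a = c ∨ b = c)
    {x a : V} (hxa : G.Adj x a) (huniq : ∀ b, G.Adj x b → b = a) :
    Nonempty (G ≃g pathGraph (Fintype.card V)) := by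
  classical
  set n := Fintype.card V with hn
  set f : V → Fin n := fun u => ⟨G.dist x u, dist_lt_card hG x u⟩ with hf
  have hinj : Function.Injective f := by
    intro u v huv
    exact dist_inj_of_unique_nbr hG hdeg hxa huniq (G.dist x u) u v rfl
      (by simpa [hf, Fin.ext_iff] using huv.symm)
  have hbij : Function.Bijective f :=
    (Fintype.bijective_iff_injective_and_card f).mpr ⟨hinj, by simp [hn]⟩
  have hiff : ∀ u v : V, (pathGraph n).Adj (f u) (f v) ↔ G.Adj u v := by
    intro u v
    rw [pathGraph_adj]
    constructor
    · rintro (h | h)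
      · obtain ⟨w, hw, hwd⟩ := exists_pred hG (x := x) (u := v) (k := G.dist x u)
          (by simp only [hf] at h; omega)
        have : w = u := dist_inj_of_unique_nbr hG hdeg hxa huniq _ w u hwd rfl
        exact this ▸ hw
      · obtain ⟨w, hw, hwd⟩ := exists_pred hG (x := x) (u := u) (k := G.dist x v)
          (by simp only [hf] at h; omega)
        have : w = v := dist_inj_of_unique_nbr hG hdeg hxa huniq _ w v hwd rfl
        exact (this ▸ hw).symm
    · intro hadj
      have h1 : G.dist x v ≤ G.dist x u + 1 := by
        have := hG.dist_triangle (u := x) (v := u) (w := v)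
        rw [SimpleGraph.dist_eq_one_iff_adj.mpr hadj] at this
        omega
      have h2 : G.dist x u ≤ G.dist x v + 1 := by
        have := hG.dist_triangle (u := x) (v := v) (w := u)
        rw [SimpleGraph.dist_eq_one_iff_adj.mpr hadj.symm] at this
        omega
      have h3 : G.dist x u ≠ G.dist x v := by
        intro h
        exact hadj.ne (hinj (by simp [hf, Fin.ext_iff, h]))
      simp only [hf]
      omega
  exact ⟨{ toEquiv := Equiv.ofBijective f hbij,
           map_rel_iff' := fun {u v} => hiff u v }⟩


theorem mod_succ_cases {m a : ℕ} (ha : a < m) :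
    ((a + 1) % m = a + 1 ∧ a + 1 < m) ∨ ((a + 1) % m = 0 ∧ a + 1 = m) := by
  rcases Nat.lt_or_ge (a + 1) m with h | h
  · exact Or.inl ⟨Nat.mod_eq_of_lt h, h⟩
  · have he : a + 1 = m := by omega
    exact Or.inr ⟨by rw [he, Nat.mod_self], he⟩

theorem mod_char {n a b : ℕ} (hn : 2 ≤ n) (ha : a < n) (hb : b < n) :
    (b + (n - a)) % n = 1 ↔ b = (a + 1) % n := by
  have h1 : (b + (n - a)) < n ∧ (b + (n - a)) % n = b + (n - a) ∨
      (b + (n - a)) ≥ n ∧ (b + (n - a)) % n = b + (n - a) - n := by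
    rcases Nat.lt_or_ge (b + (n - a)) n with h | h
    · exact Or.inl ⟨h, Nat.mod_eq_of_lt h⟩
    · refine Or.inr ⟨h, ?_⟩
      rw [Nat.mod_eq_sub_mod h]
      exact Nat.mod_eq_of_lt (by omega)
  have h2 := mod_succ_cases ha
  rcases h1 with ⟨hl, h1⟩ | ⟨hl, h1⟩ <;> rcases h2 with ⟨h2, h2'⟩ | ⟨h2, h2'⟩ <;>
    rw [h1, h2] <;> constructor <;> intro h3 <;> omega

theorem exists_seq {G : SimpleGraph V}
    (htwo : ∀ z : V, ∃ a b, a ≠ b ∧ G.Adj z a ∧ G.Adj z b) (x0 : V) :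
    ∃ v : ℕ → V, v 0 = x0 ∧ (∀ k, G.Adj (v k) (v (k + 1))) ∧ (∀ k, v (k + 2) ≠ v k) := by
  classical
  choose nb1 nb2 hnb hadj1 hadj2 using htwo
  set next : V → V → V := fun p c => if nb1 c ≠ p then nb1 c else nb2 c with hnext
  have hnext_adj : ∀ p c, G.Adj c (next p c) := by
    intro p c
    simp only [hnext]
    split
    · exact hadj1 c
    · exact hadj2 c
  have hnext_ne : ∀ p c, next p c ≠ p := by
    intro p c
    simp only [hnext]
    split
    · assumption
    · rename_i h
      push_neg at h
      rw [← h]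
      exact (hnb c).symm
  set fs : ℕ → V × V := fun k => Nat.rec (x0, nb1 x0) (fun _ pr => (pr.2, next pr.1 pr.2)) k
    with hfs
  refine ⟨fun k => (fs k).1, rfl, ?_, ?_⟩
  · intro k
    match k with
    | 0 => exact hadj1 x0
    | (k + 1) => exact hnext_adj _ _
  · intro k
    exact hnext_ne _ _

theorem iso_cycle_of_two_nbrs [Fintype V] {G : SimpleGraph V} (hG : G.Connected)
    (hcard : 3 ≤ Fintype.card V)
    (hdeg : ∀ z a b c : V, G.Adj z a → G.Adj z b → G.Adj z c → a = b ∨ a = c ∨ b = c)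
    (htwo : ∀ z : V, ∃ a b, a ≠ b ∧ G.Adj z a ∧ G.Adj z b) :
    Nonempty (G ≃g cycleGraph (Fintype.card V)) := by
  classical
  obtain ⟨n, hncard⟩ : ∃ n, Fintype.card V = n := ⟨_, rfl⟩
  rw [hncard]
  have hn : 3 ≤ n := hncard ▸ hcard
  have hV : Nonempty V := Fintype.card_pos_iff.mp (by omega)
  obtain ⟨x0⟩ := hV
  obtain ⟨v, hv0, hA, hNe⟩ := exists_seq htwo x0
  -- there is a collision
  have hQ : ∃ m, ∃ j, j < m ∧ v j = v m := by
    obtain ⟨i, j, hne, hij⟩ := Fintype.exists_ne_map_eq_of_card_lt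
      (fun i : Fin (n + 1) => v i.val) (by rw [Fintype.card_fin, hncard]; omega)
    rcases Nat.lt_trichotomy i.val j.val with h | h | h
    · exact ⟨j.val, i.val, h, hij⟩
    · exact absurd (Fin.ext h) hne
    · exact ⟨i.val, j.val, h, hij.symm⟩
  obtain ⟨m, ⟨j, hjm, hvj⟩, hmin⟩ :
      ∃ m, (∃ j, j < m ∧ v j = v m) ∧ ∀ m' < m, ¬ ∃ j', j' < m' ∧ v j' = v m' :=
    ⟨Nat.find hQ, Nat.find_spec hQ, fun m' h => Nat.find_min hQ h⟩
  have hinj : ∀ ⦃i i' : ℕ⦄, i < m → i' < m → v i = v i' → i = i' := by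
    intro i i' hi hi' he
    by_contra hne
    rcases Nat.lt_or_ge i i' with h | h
    · exact hmin i' hi' ⟨i, h, he⟩
    · exact hmin i hi ⟨i', by omega, he.symm⟩
  -- the first collision is with v 0
  have hj0 : j = 0 := by
    by_contra hj
    have hj1 : 1 ≤ j := by omega
    have hm2 : 2 ≤ m := by omega
    have hadjm : G.Adj (v j) (v (m - 1)) := by
      have h := hA (m - 1)
      rw [show m - 1 + 1 = m by omega, ← hvj] at h
      exact h.symm
    have hprev : G.Adj (v j) (v (j - 1)) := by
      have h := hA (j - 1)
      rw [show j - 1 + 1 = j by omega] at h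
      exact h.symm
    rcases hdeg (v j) (v (j - 1)) (v (j + 1)) (v (m - 1)) hprev (hA j) hadjm with h | h | h
    · have h2 := hNe (j - 1)
      rw [show j - 1 + 2 = j + 1 by omega] at h2
      exact h2 h.symm
    · exact hmin (m - 1) (by omega) ⟨j - 1, by omega, h⟩
    · rcases Nat.lt_trichotomy (j + 1) (m - 1) with h' | h' | h'
      · exact hmin (m - 1) (by omega) ⟨j + 1, h', h⟩
      · have h2 := hNe j
        rw [show j + 2 = m by omega] at h2
        exact h2 hvj.symm
      · have hjm1 : j + 1 = m := by omega
        exact (hA j).ne (by rw [hjm1, ← hvj])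
  subst hj0
  have hm3 : 3 ≤ m := by
    by_contra h
    push_neg at h
    have : m = 1 ∨ m = 2 := by omega
    rcases this with rfl | rfl
    · exact (hA 0).ne hvj
    · exact hNe 0 hvj.symm
  have hv0m : v m = v 0 := hvj.symm
  have hAwrap : G.Adj (v (m - 1)) (v 0) := by
    have h := hA (m - 1)
    rw [show m - 1 + 1 = m by omega, hv0m] at h
    exact h
  -- every neighbor of a cycle vertex is one of the two adjacent cycle vertices
  have hnbrs : ∀ k, k < m → ∀ c, G.Adj (v k) c →
      (c = v (if k + 1 = m then 0 else k + 1) ∨ c = v (if k = 0 then m - 1 else k - 1)) := by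
    intro k hk c hc
    by_cases hk0 : k = 0
    · subst hk0
      rcases hdeg (v 0) (v 1) (v (m - 1)) c (hA 0) hAwrap.symm hc with h | h | h
      · exact absurd (hinj (by omega) (by omega) h) (by omega)
      · rw [if_neg (by omega : ¬ (0 + 1 = m)), if_pos rfl]
        exact Or.inl h.symm
      · rw [if_pos rfl]
        exact Or.inr h.symm
    · by_cases hk1 : k + 1 = m
      · have hup : G.Adj (v k) (v 0) := by
          have h := hA k
          rw [hk1, hv0m] at h
          exact h
        have hdn : G.Adj (v k) (v (k - 1)) := by
          have h := hA (k - 1)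
          rw [show k - 1 + 1 = k by omega] at h
          exact h.symm
        rcases hdeg (v k) (v 0) (v (k - 1)) c hup hdn hc with h | h | h
        · exact absurd (hinj (by omega) (by omega) h) (by omega)
        · rw [if_pos hk1]
          exact Or.inl h.symm
        · rw [if_neg hk0]
          exact Or.inr h.symm
      · have hdn : G.Adj (v k) (v (k - 1)) := by
          have h := hA (k - 1)
          rw [show k - 1 + 1 = k by omega] at h
          exact h.symm
        rcases hdeg (v k) (v (k + 1)) (v (k - 1)) c (hA k) hdn hc with h | h | h
        · exact absurd (hinj (by omega) (by omega) h) (by omega)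
        · rw [if_neg hk1]
          exact Or.inl h.symm
        · rw [if_neg hk0]
          exact Or.inr h.symm
  have hclose : ∀ k, k < m → ∀ c, G.Adj (v k) c → ∃ i, i < m ∧ c = v i := by
    intro k hk c hc
    rcases hnbrs k hk c hc with h | h
    · split at h
      · exact ⟨0, by omega, h⟩
      · exact ⟨k + 1, by omega, h⟩
    · split at h
      · exact ⟨m - 1, by omega, h⟩
      · exact ⟨k - 1, by omega, h⟩
  -- all vertices are on the cycle
  have hall : ∀ u : V, ∃ i, i < m ∧ u = v i := by
    have key : ∀ {y z : V} (_ : G.Walk y z), z = v 0 → ∃ i, i < m ∧ y = v i := by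
      intro y z w
      induction w with
      | nil => exact fun h => ⟨0, by omega, h⟩
      | @cons y' z' _ h q ih =>
        intro hz
        obtain ⟨i, hi, rfl⟩ := ih hz
        exact hclose i hi y' h.symm
    intro u
    exact key (hG.preconnected u (v 0)).some rfl
  -- m = n
  have hmn : m = n := by
    have hsub : (Finset.univ : Finset V) ⊆ (Finset.range m).image v := by
      intro u _
      obtain ⟨i, hi, rfl⟩ := hall u
      exact Finset.mem_image.mpr ⟨i, Finset.mem_range.mpr hi, rfl⟩
    have h1 : Fintype.card V ≤ ((Finset.range m).image v).card := by
      rw [← Finset.card_univ]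
      exact Finset.card_le_card hsub
    have h2 : ((Finset.range m).image v).card = m := by
      rw [Finset.card_image_of_injOn, Finset.card_range]
      intro i hi i' hi' he
      exact hinj (Finset.mem_range.mp hi) (Finset.mem_range.mp hi') he
    have h3 : ((Finset.range m).image v).card ≤ Fintype.card V := by
      rw [← Finset.card_univ]
      exact Finset.card_le_card (Finset.subset_univ _)
    omega
  subst hmn
  -- the bijection
  have hfinj : Function.Injective (fun i : Fin m => v i.val) := by
    intro i j hij
    exact Fin.ext (hinj i.isLt j.isLt hij)
  have hbij : Function.Bijective (fun i : Fin m => v i.val) :=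
    (Fintype.bijective_iff_injective_and_card _).mpr ⟨hfinj, by rw [Fintype.card_fin, hncard]⟩
  have hsubval : ∀ (u w : Fin m), (u - w).val = (u.val + (m - w.val)) % m := by
    intro u w
    rw [Fin.sub_def]
    simp [Nat.add_comm]
  have hGadj : ∀ i j : Fin m, G.Adj (v i.val) (v j.val) ↔ (cycleGraph m).Adj i j := by
    intro i j
    have hiv := i.isLt
    have hjv := j.isLt
    have hmodi := mod_succ_cases (m := m) (a := i.val) hiv
    have hmodj := mod_succ_cases (m := m) (a := j.val) hjv
    rw [cycleGraph_adj', hsubval i j, hsubval j i, mod_char (by omega) hjv hiv, mod_char (by omega) hiv hjv]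
    constructor
    · intro hadj
      rcases hnbrs i.val hiv (v j.val) hadj with h | h
      · right
        split at h
        · rename_i hcond
          have hj0 : j.val = 0 := hinj hjv (by omega) h
          rcases hmodi with ⟨h2, h2'⟩ | ⟨h2, h2'⟩ <;> omega
        · rename_i hcond
          have hj1 : j.val = i.val + 1 := hinj hjv (by omega) h
          rcases hmodi with ⟨h2, h2'⟩ | ⟨h2, h2'⟩ <;> omega
      · left
        split at h
        · rename_i hcond
          have hj1 : j.val = m - 1 := hinj hjv (by omega) h
          rcases hmodj with ⟨h2, h2'⟩ | ⟨h2, h2'⟩ <;> omega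
        · rename_i hcond
          have hj1 : j.val = i.val - 1 := hinj hjv (by omega) h
          have hine : i.val ≠ 0 := hcond
          rcases hmodj with ⟨h2, h2'⟩ | ⟨h2, h2'⟩ <;> omega
    · intro hc
      rcases hc with h | h
      · -- i.val = (j.val + 1) % m
        rcases hmodj with ⟨h2, h2'⟩ | ⟨h2, h2'⟩
        · have hij : i.val = j.val + 1 := by omega
          rw [hij]
          exact (hA j.val).symm
        · have hi0 : i.val = 0 := by omega
          have hj1 : j.val = m - 1 := by omega
          rw [hi0, hj1]
          exact hAwrap.symm
      · -- j.val = (i.val + 1) % m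
        rcases hmodi with ⟨h2, h2'⟩ | ⟨h2, h2'⟩
        · have hij : j.val = i.val + 1 := by omega
          rw [hij]
          exact hA i.val
        · have hj0 : j.val = 0 := by omega
          have hi1 : i.val = m - 1 := by omega
          rw [hj0, hi1]
          exact hAwrap
  let e : cycleGraph m ≃g G :=
    { toEquiv := Equiv.ofBijective _ hbij, map_rel_iff' := fun {i j} => hGadj i j }
  exact ⟨e.symm⟩



/-- distance is preserved by isomorphisms -/
theorem iso_dist {G : SimpleGraph V} {H : SimpleGraph W} (e : G ≃g H) (u v : V) :
    H.dist (e u) (e v) = G.dist u v := by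
  by_cases hr : G.Reachable u v
  · refine le_antisymm ?_ ?_
    · obtain ⟨p, hp⟩ := hr.exists_walk_length_eq_dist
      calc H.dist (e u) (e v) ≤ (p.map e.toHom).length := SimpleGraph.dist_le _
      _ = G.dist u v := by rw [SimpleGraph.Walk.length_map, hp]
    · have hr' : H.Reachable (e u) (e v) := hr.map e.toHom
      obtain ⟨q, hq⟩ := hr'.exists_walk_length_eq_dist
      calc G.dist u v ≤ ((q.map e.symm.toHom).copy (e.symm_apply_apply u)
            (e.symm_apply_apply v)).length := SimpleGraph.dist_le _
      _ = H.dist (e u) (e v) := by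
          rw [SimpleGraph.Walk.length_copy, SimpleGraph.Walk.length_map, hq]
  · have hr' : ¬ H.Reachable (e u) (e v) := by
      intro h
      have h2 := h.map e.symm.toHom
      refine hr ?_
      have e1 : e.symm.toHom (e u) = u := e.symm_apply_apply u
      have e2 : e.symm.toHom (e v) = v := e.symm_apply_apply v
      rwa [e1, e2] at h2
    rw [SimpleGraph.dist_eq_zero_of_not_reachable hr,
      SimpleGraph.dist_eq_zero_of_not_reachable hr']

theorem twoRes_of_iso {G : SimpleGraph V} {H : SimpleGraph W} (e : G ≃g H)
    (h : TwoRes H) : TwoRes G := by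
  intro x y u v hxy huv hux huy hvx hvy
  have := h (e x) (e y) (e u) (e v) (fun hh => hxy (e.injective hh))
    (fun hh => huv (e.injective hh)) (fun hh => hux (e.injective hh))
    (fun hh => huy (e.injective hh)) (fun hh => hvx (e.injective hh))
    (fun hh => hvy (e.injective hh))
  rwa [iso_dist e, iso_dist e, iso_dist e, iso_dist e] at this

/-- lower bound on walk length from a 1-Lipschitz integer labelling -/
theorem walk_len_lower {G : SimpleGraph W} (f : W → ℤ)
    (hf : ∀ a b, G.Adj a b → f b ≤ f a + 1 ∧ f a ≤ f b + 1) {u v : W} (p : G.Walk u v) :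
    (f u - f v).natAbs ≤ p.length := by
  induction p with
  | nil => simp
  | @cons a b c h q ih =>
    have h2 := hf a b h
    rw [SimpleGraph.Walk.length_cons]
    omega

theorem pathGraph_walk {n : ℕ} : ∀ (k : ℕ) (i j : Fin n), i.val + k = j.val →
    ∃ p : (pathGraph n).Walk i j, p.length = k := by
  intro k
  induction k with
  | zero =>
    intro i j h
    have : i = j := Fin.ext (by omega)
    subst this
    exact ⟨SimpleGraph.Walk.nil, rfl⟩
  | succ k ih =>
    intro i j h
    have hj1 : 1 ≤ j.val := by omega
    set j' : Fin n := ⟨j.val - 1, by omega⟩ with hj'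
    have hadj : (pathGraph n).Adj j' j := by
      rw [pathGraph_adj]
      left
      simp [hj']
      omega
    obtain ⟨p, hp⟩ := ih i j' (by simp [hj']; omega)
    exact ⟨p.concat hadj, by rw [SimpleGraph.Walk.length_concat, hp]⟩

theorem pathGraph_dist {n : ℕ} (hn : 1 ≤ n) (i j : Fin n) :
    (pathGraph n).dist i j = ((i.val : ℤ) - (j.val : ℤ)).natAbs := by
  obtain ⟨k, rfl⟩ : ∃ k, n = k + 1 := ⟨n - 1, by omega⟩
  refine le_antisymm ?_ ?_
  · rcases Nat.le_total i.val j.val with h | h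
    · obtain ⟨p, hp⟩ := pathGraph_walk (j.val - i.val) i j (by omega)
      calc (pathGraph (k+1)).dist i j ≤ p.length := SimpleGraph.dist_le _
      _ = _ := by rw [hp]; omega
    · obtain ⟨p, hp⟩ := pathGraph_walk (i.val - j.val) j i (by omega)
      calc (pathGraph (k+1)).dist i j ≤ p.reverse.length := SimpleGraph.dist_le _
      _ = _ := by rw [SimpleGraph.Walk.length_reverse, hp]; omega
  · obtain ⟨p, hp⟩ := ((pathGraph_connected k).preconnected i j).exists_walk_length_eq_dist
    have := walk_len_lower (fun w : Fin (k+1) => (w.val : ℤ))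
      (by
        intro a b hab
        rw [pathGraph_adj] at hab
        omega) p
    omega

theorem twoRes_path {n : ℕ} (hn : 1 ≤ n) : TwoRes (pathGraph n) := by
  intro x y u v hxy huv hux huy hvx hvy
  by_contra hcon
  push_neg at hcon
  obtain ⟨h1, h2⟩ := hcon
  rw [pathGraph_dist hn, pathGraph_dist hn] at h1 h2
  have hxy' : x.val ≠ y.val := fun h => hxy (Fin.ext h)
  have huv' : u.val ≠ v.val := fun h => huv (Fin.ext h)
  omega



theorem fin_subval {n : ℕ} (u w : Fin n) : (u - w).val = (u.val + (n - w.val)) % n := by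
  rw [Fin.sub_def]
  simp [Nat.add_comm]

theorem mymod {n s r : ℕ} (h : s = r + n ∨ s = r) (hr : r < n) : s % n = r := by
  rcases h with rfl | rfl
  · rw [Nat.add_mod_right]
    exact Nat.mod_eq_of_lt hr
  · exact Nat.mod_eq_of_lt hr

theorem fin_subval_cases {n : ℕ} (a b : Fin n) :
    ((a - b).val = a.val - b.val ∧ b.val ≤ a.val) ∨
    ((a - b).val = a.val + n - b.val ∧ a.val < b.val) := by
  have ha : a.val < n := a.isLt
  have hb : b.val < n := b.isLt
  rw [fin_subval]
  rcases le_or_gt b.val a.val with h | h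
  · exact Or.inl ⟨mymod (by omega) (by omega), h⟩
  · exact Or.inr ⟨mymod (by omega) (by omega), h⟩

theorem cycleGraph_walk {n : ℕ} (hn : 3 ≤ n) : ∀ (k : ℕ) (i j : Fin n), (j - i).val = k →
    ∃ p : (cycleGraph n).Walk i j, p.length = k := by
  haveI : NeZero n := ⟨by omega⟩
  have hval1 : (1 : Fin n).val = 1 := by rw [Fin.val_one']; exact Nat.mod_eq_of_lt (by omega)
  intro k
  induction k with
  | zero =>
    intro i j h
    have h0 : j - i = 0 := by
      apply Fin.ext
      rw [h, Fin.val_zero]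
    have : j = i := by
      have := sub_eq_zero.mp h0
      exact this
    subst this
    exact ⟨SimpleGraph.Walk.nil, rfl⟩
  | succ k ih =>
    intro i j h
    have hadj : (cycleGraph n).Adj (j - 1) j := by
      rw [cycleGraph_adj']
      right
      rw [sub_sub_cancel, hval1]
    have hj' : (j - 1 - i).val = k := by
      have hrc : j - 1 - i = (j - i) - 1 := sub_right_comm _ _ _
      have hlt : k + 1 < n := h ▸ (j - i).isLt
      rw [hrc, fin_subval, hval1, h]
      exact mymod (by omega) (by omega)
    obtain ⟨p, hp⟩ := ih i (j - 1) hj'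
    exact ⟨p.concat hadj, by rw [SimpleGraph.Walk.length_concat, hp]⟩

theorem cycle_sub_dvd {n : ℕ} (hn : 3 ≤ n) (a b : Fin n) :
    (n : ℤ) ∣ ((a.val : ℤ) - b.val - ((a - b).val : ℤ)) := by
  rcases fin_subval_cases a b with ⟨hm, hba⟩ | ⟨hm, hba⟩
  · exact ⟨0, by push_cast [hm]; omega⟩
  · exact ⟨-1, by push_cast [hm]; omega⟩

theorem cycle_walk_lower {n : ℕ} (hn : 3 ≤ n) {i j : Fin n} (p : (cycleGraph n).Walk i j) :
    ∃ t : ℤ, t.natAbs ≤ p.length ∧ (n : ℤ) ∣ ((j.val : ℤ) - (i.val : ℤ) - t) := by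
  induction p with
  | nil => exact ⟨0, by simp, by simp⟩
  | @cons a b c h q ih =>
    obtain ⟨t, ht, hd⟩ := ih
    have hstep : (n : ℤ) ∣ ((b.val : ℤ) - a.val - 1) ∨ (n : ℤ) ∣ ((b.val : ℤ) - a.val + 1) := by
      rw [cycleGraph_adj'] at h
      rcases h with h | h
      · right
        have := cycle_sub_dvd hn a b
        rw [h] at this
        obtain ⟨q', hq'⟩ := this
        exact ⟨-q', by push_cast at hq' ⊢; linarith⟩
      · left
        have := cycle_sub_dvd hn b a
        rw [h] at this
        obtain ⟨q', hq'⟩ := this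
        exact ⟨q', by push_cast at hq' ⊢; linarith⟩
    rcases hstep with h' | h'
    · refine ⟨t + 1, ?_, ?_⟩
      · rw [SimpleGraph.Walk.length_cons]; omega
      · have := dvd_add hd h'
        have heq : ((c.val : ℤ) - b.val - t) + ((b.val : ℤ) - a.val - 1) =
            (c.val : ℤ) - a.val - (t + 1) := by ring
        rwa [heq] at this
    · refine ⟨t - 1, ?_, ?_⟩
      · rw [SimpleGraph.Walk.length_cons]; omega
      · have := dvd_add hd h'
        have heq : ((c.val : ℤ) - b.val - t) + ((b.val : ℤ) - a.val + 1) =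
            (c.val : ℤ) - a.val - (t - 1) := by ring
        rwa [heq] at this

theorem cycleGraph_dist {n : ℕ} (hn : 3 ≤ n) (i j : Fin n) :
    (cycleGraph n).dist i j = min ((j - i).val) ((i - j).val) := by
  haveI : NeZero n := ⟨by omega⟩
  have hconn : (cycleGraph n).Connected := by
    obtain ⟨m, rfl⟩ : ∃ m, n = m + 1 := ⟨n - 1, by omega⟩
    exact cycleGraph_connected
  refine le_antisymm (le_min ?_ ?_) ?_
  · obtain ⟨p, hp⟩ := cycleGraph_walk hn _ i j rfl
    exact hp ▸ SimpleGraph.dist_le p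
  · obtain ⟨p, hp⟩ := cycleGraph_walk hn _ j i rfl
    have := SimpleGraph.dist_le p.reverse
    rwa [SimpleGraph.Walk.length_reverse, hp] at this
  · obtain ⟨p, hp⟩ := (hconn.preconnected i j).exists_walk_length_eq_dist
    obtain ⟨t, ht, hd⟩ := cycle_walk_lower hn p
    have h1 := cycle_sub_dvd hn j i
    have h2 := cycle_sub_dvd hn i j
    set m1 := (j - i).val with hm1
    set m2 := (i - j).val with hm2
    have hm1lt : m1 < n := (j - i).isLt
    have hm2lt : m2 < n := (i - j).isLt
    -- n ∣ m1 - t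
    have hd1 : (n : ℤ) ∣ ((m1 : ℤ) - t) := by
      have h3 := dvd_sub hd h1
      have heq : ((j.val : ℤ) - i.val - t) - ((j.val : ℤ) - i.val - m1) = (m1 : ℤ) - t := by ring
      rwa [heq] at h3
    -- n ∣ m1 + m2
    have hd2 : (n : ℤ) ∣ ((m1 : ℤ) + m2) := by
      have h3 := dvd_add h1 h2
      have heq : ((j.val : ℤ) - i.val - m1) + ((i.val : ℤ) - j.val - m2) = -((m1 : ℤ) + m2) := by
        ring
      rw [heq] at h3
      exact (dvd_neg).mp h3
    by_contra hlt
    push_neg at hlt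
    rw [hp] at ht
    have hsum : (m1 : ℤ) + m2 = 0 ∨ (m1 : ℤ) + m2 = n := by
      rcases Nat.lt_or_ge (m1 + m2) n with h | h
      · left
        exact Int.eq_zero_of_abs_lt_dvd hd2 (by rw [abs_of_nonneg (by positivity)]; push_cast; omega)
      · right
        have h4 : (n : ℤ) ∣ ((m1 : ℤ) + m2 - n) := (dvd_sub hd2 dvd_rfl)
        have h5 : (m1 : ℤ) + m2 - n = 0 := by
          apply Int.eq_zero_of_abs_lt_dvd h4
          rw [abs_lt]
          constructor <;> push_cast <;> omega
        omega
    have hz : (m1 : ℤ) - t = 0 := by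
      apply Int.eq_zero_of_abs_lt_dvd hd1
      rw [abs_lt]
      constructor <;> omega
    omega

theorem twoRes_odd_cycle {n : ℕ} (hn : 3 ≤ n) (hodd : Odd n) : TwoRes (cycleGraph n) := by
  haveI : NeZero n := ⟨by omega⟩
  intro x y u v hxy huv hux huy hvx hvy
  by_contra hcon
  push_neg at hcon
  obtain ⟨h1, h2⟩ := hcon
  rw [cycleGraph_dist hn, cycleGraph_dist hn] at h1 h2
  have negval : ∀ z w : Fin n, z ≠ w → (w - z).val = n - (z - w).val ∧ 1 ≤ (z - w).val := by
    intro z w hzw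
    have hne : z - w ≠ 0 := sub_ne_zero.mpr hzw
    have hge : 1 ≤ (z - w).val := by
      by_contra hcc
      push_neg at hcc
      exact hne (Fin.ext (by rw [Fin.val_zero]; omega))
    have hsw : w - z = -(z - w) := (neg_sub z w).symm
    rw [hsw, Fin.coe_neg]
    exact ⟨Nat.mod_eq_of_lt (by omega), hge⟩
  obtain ⟨ea, ea'⟩ := negval x u hux.symm
  obtain ⟨eb, eb'⟩ := negval x v hvx.symm
  obtain ⟨ec, ec'⟩ := negval y u huy.symm
  obtain ⟨ed, ed'⟩ := negval y v hvy.symm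
  rw [ea, eb] at h1
  rw [ec, ed] at h2
  have hx' : (x - u).val = (x - v).val ∨ (x - u).val + (x - v).val = n := by
    have l1 : (x - u).val < n := (x - u).isLt
    have l2 : (x - v).val < n := (x - v).isLt
    omega
  have hy' : (y - u).val = (y - v).val ∨ (y - u).val + (y - v).val = n := by
    have l1 : (y - u).val < n := (y - u).isLt
    have l2 : (y - v).val < n := (y - v).isLt
    omega
  have sum_zero : ∀ z w z' w' : Fin n, z.val + w.val = n → z + w = 0 := by
    intro z w _ _ hzw
    apply Fin.ext
    rw [Fin.add_def]
    simp only [Fin.val_zero]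
    rw [hzw, Nat.mod_self]
  have hxcase : x - u = x - v ∨ (x - u) + (x - v) = 0 := by
    rcases hx' with h | h
    · exact Or.inl (Fin.ext h)
    · exact Or.inr (sum_zero _ _ x x h)
  have hycase : y - u = y - v ∨ (y - u) + (y - v) = 0 := by
    rcases hy' with h | h
    · exact Or.inl (Fin.ext h)
    · exact Or.inr (sum_zero _ _ y y h)
  rcases hxcase with h | e1
  · exact huv (sub_right_inj.mp h)
  rcases hycase with h | e2
  · exact huv (sub_right_inj.mp h)
  -- 2(x - y) = 0
  have e3 : (x - y) + (x - y) = 0 := by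
    rw [show (x - y) + (x - y) = (x - u + (x - v)) - (y - u + (y - v)) by abel, e1, e2, sub_zero]
  have hne : x - y ≠ 0 := sub_ne_zero.mpr hxy
  have hge : 1 ≤ (x - y).val := by
    by_contra hcc
    push_neg at hcc
    exact hne (Fin.ext (by rw [Fin.val_zero]; omega))
  have hmod : ((x - y).val + (x - y).val) % n = 0 := by
    have := congrArg Fin.val e3
    rw [Fin.add_def] at this
    simpa [Fin.val_zero] using this
  have hdvd : n ∣ (x - y).val * 2 := by
    have := Nat.dvd_of_mod_eq_zero hmod
    rwa [← Nat.two_mul, Nat.mul_comm] at this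
  have hdvd2 : n ∣ (x - y).val := (Nat.coprime_two_right.mpr hodd).dvd_of_dvd_mul_right hdvd
  have := Nat.eq_zero_of_dvd_of_lt hdvd2 (x - y).isLt
  omega

set_option maxHeartbeats 1000000 in
theorem not_twoRes_even_cycle {n : ℕ} (hn : 3 ≤ n) (he : Even n) :
    ¬ TwoRes (cycleGraph n) := by
  intro hP
  haveI : NeZero n := ⟨by omega⟩
  have hn4 : 4 ≤ n := by
    rcases he with ⟨r, hr⟩
    omega
  have hhalf : n % 2 = 0 := Nat.even_iff.mp he
  have p0 : (0:ℕ) < n := by omega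
  have p1 : (1:ℕ) < n := by omega
  have ph : n / 2 < n := by omega
  have pm : n - 1 < n := by omega
  have key : ∀ a b : ℕ, ∀ (ha : a < n) (hb : b < n),
      (cycleGraph n).dist ⟨a, ha⟩ ⟨b, hb⟩ = min ((b + (n - a)) % n) ((a + (n - b)) % n) := by
    intro a b ha hb
    rw [cycleGraph_dist hn, fin_subval, fin_subval]
  have d1 : (cycleGraph n).dist (⟨1, p1⟩ : Fin n) ⟨0, p0⟩ = 1 := by
    rw [key]
    have e1 : (0 + (n - 1)) % n = n - 1 := mymod (by omega) (by omega)
    have e2 : (1 + (n - 0)) % n = 1 := mymod (by omega) (by omega)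
    rw [e1, e2]
    omega
  have d2 : (cycleGraph n).dist (⟨n - 1, pm⟩ : Fin n) ⟨0, p0⟩ = 1 := by
    rw [key]
    have e1 : (0 + (n - (n - 1))) % n = 1 := mymod (by omega) (by omega)
    have e2 : ((n - 1) + (n - 0)) % n = n - 1 := mymod (by omega) (by omega)
    rw [e1, e2]
    omega
  have d3 : (cycleGraph n).dist (⟨1, p1⟩ : Fin n) ⟨n / 2, ph⟩ = n / 2 - 1 := by
    rw [key]
    have e1 : (n / 2 + (n - 1)) % n = n / 2 - 1 := mymod (by omega) (by omega)
    have e2 : (1 + (n - n / 2)) % n = n / 2 + 1 := mymod (by omega) (by omega)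
    rw [e1, e2]
    omega
  have d4 : (cycleGraph n).dist (⟨n - 1, pm⟩ : Fin n) ⟨n / 2, ph⟩ = n / 2 - 1 := by
    rw [key]
    have e1 : (n / 2 + (n - (n - 1))) % n = n / 2 + 1 := mymod (by omega) (by omega)
    have e2 : ((n - 1) + (n - n / 2)) % n = n / 2 - 1 := mymod (by omega) (by omega)
    rw [e1, e2]
    omega
  have hne : ∀ a b : ℕ, ∀ (ha : a < n) (hb : b < n), a ≠ b →
      (⟨a, ha⟩ : Fin n) ≠ ⟨b, hb⟩ := by
    intro a b ha hb hab h
    exact hab (congrArg Fin.val h)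
  have hres := hP ⟨0, p0⟩ ⟨n / 2, ph⟩ ⟨1, p1⟩ ⟨n - 1, pm⟩
    (hne 0 (n / 2) (by omega) (by omega) (by omega))
    (hne 1 (n - 1) (by omega) (by omega) (by omega))
    (hne 1 0 (by omega) (by omega) (by omega))
    (hne 1 (n / 2) (by omega) (by omega) (by omega))
    (hne (n - 1) 0 (by omega) (by omega) (by omega))
    (hne (n - 1) (n / 2) (by omega) (by omega) (by omega))
  rcases hres with h | h
  · exact h (d1.trans d2.symm)
  · exact h (d3.trans d4.symm)


theorem twoRes_iff [Fintype V] (G : SimpleGraph V) (hG : G.Connected)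
    (hn : 3 ≤ Fintype.card V) :
    TwoRes G ↔
      ((∃ n : ℕ, Odd n ∧ Nonempty (G ≃g cycleGraph n)) ∨
        (∃ n : ℕ, 3 ≤ n ∧ Nonempty (G ≃g pathGraph n))) := by
  constructor
  · intro hP
    have hdeg : ∀ z a b c : V, G.Adj z a → G.Adj z b → G.Adj z c → a = b ∨ a = c ∨ b = c :=
      fun z a b c ha hb hc => degle2 hG hP ha hb hc
    by_cases hone : ∃ x a, G.Adj x a ∧ ∀ b, G.Adj x b → b = a
    · obtain ⟨x, a, hxa, huniq⟩ := hone
      exact Or.inr ⟨Fintype.card V, hn, iso_path_of_endpoint hG hdeg hxa huniq⟩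
    · push_neg at hone
      have hnt : Nontrivial V := Fintype.one_lt_card_iff_nontrivial.mp (by omega)
      have htwo : ∀ z : V, ∃ a b, a ≠ b ∧ G.Adj z a ∧ G.Adj z b := by
        intro z
        obtain ⟨y, hy⟩ := exists_ne z
        obtain ⟨a, hza⟩ := exists_nbr hG (Ne.symm hy)
        obtain ⟨b, hzb, hba⟩ := hone z a hza
        exact ⟨a, b, fun h => hba (h ▸ rfl), hza, hzb⟩
      obtain ⟨e⟩ := iso_cycle_of_two_nbrs hG hn hdeg htwo
      rcases Nat.even_or_odd (Fintype.card V) with he | ho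
      · exact absurd (twoRes_of_iso e.symm hP) (not_twoRes_even_cycle hn he)
      · exact Or.inl ⟨Fintype.card V, ho, ⟨e⟩⟩
  · intro h
    rcases h with ⟨n, hodd, ⟨e⟩⟩ | ⟨n, hn3, ⟨e⟩⟩
    · have hcard : Fintype.card V = n := by
        rw [← Fintype.card_fin n]
        exact Fintype.card_congr e.toEquiv
      exact twoRes_of_iso e (twoRes_odd_cycle (by omega) hodd)
    · exact twoRes_of_iso e (twoRes_path (by omega))

/-- every 3-subset of vertices is a WTR-set iff `G` is an odd cycle or a
path of order ≥ 3; equivalently, `res_wt(G) = 3` iff `G` is an odd cycle or such a path. -/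
theorem resWt_eq_three_iff [Fintype V] (G : SimpleGraph V) (hG : G.Connected)
    (hn : 3 ≤ Fintype.card V) :
    ((∀ W : Finset V, W.card = 3 → IsWTRSet G W) ↔
      ((∃ n : ℕ, Odd n ∧ Nonempty (G ≃g cycleGraph n)) ∨
        (∃ n : ℕ, 3 ≤ n ∧ Nonempty (G ≃g pathGraph n)))) ∧
    (resWt G = 3 ↔
      ((∃ n : ℕ, Odd n ∧ Nonempty (G ≃g cycleGraph n)) ∨
        (∃ n : ℕ, 3 ≤ n ∧ Nonempty (G ≃g pathGraph n)))) := by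
  classical
  have hnt : Nontrivial V := Fintype.one_lt_card_iff_nontrivial.mp (by omega)
  have hiff1 : (∀ W : Finset V, W.card = 3 → IsWTRSet G W) ↔
      ((∃ n : ℕ, Odd n ∧ Nonempty (G ≃g cycleGraph n)) ∨
        (∃ n : ℕ, 3 ≤ n ∧ Nonempty (G ≃g pathGraph n))) :=
    (three_iff G hG).trans (twoRes_iff G hG hn)
  refine ⟨hiff1, ?_⟩
  -- membership facts about the defining set of resWt
  have hS0 : ¬ (∀ W : Finset V, W.card = 0 → IsWTRSet G W) := by
    intro h
    obtain ⟨u, v, huv⟩ := exists_pair_ne V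
    obtain ⟨w, hw, -⟩ := (h ∅ rfl).1 u v huv
    exact absurd hw (Finset.notMem_empty w)
  have hS1 : ¬ (∀ W : Finset V, W.card = 1 → IsWTRSet G W) := by
    intro h
    obtain ⟨u⟩ := (inferInstance : Nonempty V)
    obtain ⟨u', hu'⟩ := exists_ne u
    obtain ⟨w, hwW, hwne, -⟩ := (h {u} (Finset.card_singleton u)).2 u (by simp) u' (by simp [hu'])
    exact hwne (Finset.mem_singleton.mp hwW)
  have hS2 : ¬ (∀ W : Finset V, W.card = 2 → IsWTRSet G W) := by
    intro h
    obtain ⟨y, a, b, hab, hya, hyb⟩ := exists_two_nbrs hG hn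
    have hay : a ≠ y := hya.ne'
    have hcard : ({a, y} : Finset V).card = 2 := by
      rw [Finset.card_insert_of_notMem (by simp [hay]), Finset.card_singleton]
    obtain ⟨w, hwW, hwne, hwd⟩ := (h {a, y} hcard).2 a (by simp) b
      (by simp [Ne.symm hab, hyb.ne'])
    have hwy : w = y := by
      rcases Finset.mem_insert.mp hwW with h' | h'
      · exact absurd h' hwne
      · exact Finset.mem_singleton.mp h'
    subst hwy
    apply hwd
    rw [SimpleGraph.dist_eq_one_iff_adj.mpr hyb.symm, SimpleGraph.dist_eq_one_iff_adj.mpr hya.symm]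
  constructor
  · intro hres
    have hne : {r | ∀ W : Finset V, W.card = r → IsWTRSet G W}.Nonempty := by
      by_contra hempty
      rw [Set.not_nonempty_iff_eq_empty] at hempty
      rw [resWt, hempty, Nat.sInf_empty] at hres
      exact absurd hres (by omega)
    have h3 := Nat.sInf_mem hne
    rw [resWt] at hres
    rw [hres] at h3
    exact hiff1.mp h3
  · intro hrhs
    have h3 : ∀ W : Finset V, W.card = 3 → IsWTRSet G W := hiff1.mpr hrhs
    have hle : resWt G ≤ 3 := Nat.sInf_le h3
    have hmem := Nat.sInf_mem (⟨3, h3⟩ :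
      {r | ∀ W : Finset V, W.card = r → IsWTRSet G W}.Nonempty)
    rw [resWt] at hle ⊢
    set r := sInf {r | ∀ W : Finset V, W.card = r → IsWTRSet G W} with hr
    have : r ≠ 0 := fun h => hS0 (h ▸ hmem)
    have : r ≠ 1 := fun h => hS1 (h ▸ hmem)
    have : r ≠ 2 := fun h => hS2 (h ▸ hmem)
    omega
end

section
/- If every k-element subset of V(G) is a weak total resolving set for a connected graph G, then the maximum degree of G is at most 2^{k−1} + k − 1. -/
open SimpleGraph

variable {V : Type*}

/-- if every `k`-subset of vertices is a WTR-set, then the maximum degree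
of `G` is at most `2^(k-1) + k - 1`. -/
theorem maxDegree_le_of_resWt [Fintype V] (G : SimpleGraph V) [DecidableRel G.Adj]
    (hG : G.Connected) (k : ℕ)
    (h : ∀ W : Finset V, W.card = k → IsWTRSet G W) :
    G.maxDegree ≤ 2 ^ (k - 1) + (k - 1) := by
  classical
  have hne : Nonempty V := hG.nonempty
  rcases Nat.eq_zero_or_pos k with hk0 | hkpos
  · subst hk0
    have hres := (h ∅ rfl).1
    have hdeg : ∀ v, G.degree v = 0 := by
      intro v
      by_contra hv
      obtain ⟨w, hw⟩ := Finset.card_pos.mp (Nat.pos_of_ne_zero hv)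
      rw [SimpleGraph.mem_neighborFinset] at hw
      obtain ⟨z, hz, _⟩ := hres v w hw.ne
      exact absurd hz (Finset.notMem_empty z)
    calc G.maxDegree ≤ 0 := G.maxDegree_le_of_forall_degree_le 0 (fun v => (hdeg v).le)
      _ ≤ _ := Nat.zero_le _
  · by_contra hbig
    push_neg at hbig
    obtain ⟨u, hu⟩ := G.exists_maximal_degree_vertex
    have hdu : 2 ^ (k - 1) + k ≤ G.degree u := by rw [hu] at hbig; omega
    have hsk : k - 1 ≤ (G.neighborFinset u).card := by
      rw [G.card_neighborFinset_eq_degree]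
      have := Nat.one_le_two_pow (n := k - 1); omega
    obtain ⟨S, hSsub, hScard⟩ := Finset.exists_subset_card_eq hsk
    have huN : u ∉ G.neighborFinset u := by simp
    have huS : u ∉ S := fun hus => huN (hSsub hus)
    set U : Finset V := insert u S with hU
    have hUcard : U.card = k := by
      rw [Finset.card_insert_of_notMem huS, hScard]; omega
    set T : Finset V := G.neighborFinset u \ U with hT
    have hTeq : T = G.neighborFinset u \ S := by
      rw [hT, hU]
      ext x
      simp only [Finset.mem_sdiff, Finset.mem_insert, not_or]
      constructor
      · rintro ⟨hx, _, hx2⟩; exact ⟨hx, hx2⟩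
      · rintro ⟨hx, hx2⟩; exact ⟨hx, fun hxu => huN (hxu ▸ hx), hx2⟩
    have hTcard : 2 ^ (k - 1) < T.card := by
      rw [hTeq, Finset.card_sdiff_of_subset hSsub, G.card_neighborFinset_eq_degree, hScard]
      omega
    -- distance formula
    have hmemN : ∀ x ∈ T, G.Adj u x := by
      intro x hx
      have := (Finset.mem_sdiff.mp hx).1
      rwa [SimpleGraph.mem_neighborFinset] at this
    have hdist : ∀ x ∈ T, ∀ w ∈ S, G.dist x w = if G.Adj x w then 1 else 2 := by
      intro x hx w hw
      split_ifs with hadj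
      · exact (G.dist_eq_one_iff_adj).mpr hadj
      · have hxw : x ≠ w := by
          rintro rfl
          exact (Finset.mem_sdiff.mp hx).2 (Finset.mem_insert_of_mem hw)
        have h1 : G.dist x w ≤ 2 := by
          have htri := hG.dist_triangle (u := x) (v := u) (w := w)
          have hxu : G.dist x u = 1 := (G.dist_eq_one_iff_adj).mpr (hmemN x hx).symm
          have huw : G.dist u w = 1 := (G.dist_eq_one_iff_adj).mpr
            (by have := hSsub hw; rwa [SimpleGraph.mem_neighborFinset] at this)
          omega
        have h2 : G.dist x w ≠ 0 := by
          exact fun hc => hxw (hG.dist_eq_zero_iff.mp hc)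
        have h3 : G.dist x w ≠ 1 := fun hc => hadj ((G.dist_eq_one_iff_adj).mp hc)
        omega
    -- pigeonhole
    have hcardB : (Finset.univ : Finset ({y // y ∈ S} → Bool)).card = 2 ^ (k - 1) := by
      simp [Fintype.card_fun, hScard]
    obtain ⟨x, hx, y, hy, hxy, hfeq⟩ :=
      Finset.exists_ne_map_eq_of_card_lt_of_maps_to (s := T)
        (t := (Finset.univ : Finset ({y // y ∈ S} → Bool)))
        (by rw [hcardB]; exact hTcard)
        (f := fun x => fun i : {y // y ∈ S} => decide (G.Adj x i.1))
        (fun x _ => Finset.mem_univ _)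
    -- contradiction with resolving
    obtain ⟨w, hwU, hwdist⟩ := (h U hUcard).1 x y hxy
    rcases Finset.mem_insert.mp hwU with rfl | hwS
    · have hx1 : G.dist x w = 1 := (G.dist_eq_one_iff_adj).mpr (hmemN x hx).symm
      have hy1 : G.dist y w = 1 := (G.dist_eq_one_iff_adj).mpr (hmemN y hy).symm
      exact hwdist (hx1.trans hy1.symm)
    · have hadj : G.Adj x w ↔ G.Adj y w := by
        have := congrFun hfeq ⟨w, hwS⟩
        simpa using this
      rw [hdist x hx w hwS, hdist y hy w hwS] at hwdist
      by_cases hxw : G.Adj x w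
      · rw [if_pos hxw, if_pos (hadj.mp hxw)] at hwdist; exact hwdist rfl
      · rw [if_neg hxw, if_neg (fun hc => hxw (hadj.mpr hc))] at hwdist; exact hwdist rfl
end

section
/- For every two natural numbers a, b with 3 ≤ a ≤ b, there exists a connected graph G with dim_wt(G) = a and res_wt(G) = b. -/
open SimpleGraph

variable {V : Type*}

namespace WTReal

/-- Distance formula for the graph consisting of a clique on `[0,a)` together with a
pendant path `0 - a - (a+1) - ⋯ - (b-1)`. -/
def F (a u v : ℕ) : ℕ :=
  if u = v then 0
  else if u < a then (if v < a then 1 else if u = 0 then v - a + 1 else v - a + 2)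
  else if v < a then (if v = 0 then u - a + 1 else u - a + 2)
  else if u < v then v - u else u - v

lemma F_comm (a u v : ℕ) : F a u v = F a v u := by
  unfold F; split_ifs <;> first | contradiction | omega

lemma F_self (a u : ℕ) : F a u u = 0 := by unfold F; split_ifs <;> first | contradiction | omega

lemma F_ne_zero {a u v : ℕ} (h : u ≠ v) : F a u v ≠ 0 := by
  unfold F; split_ifs <;> first | contradiction | omega

lemma F_step {a : ℕ} (u x v : ℕ) (hux : F a u x = 1) : F a u v ≤ F a x v + 1 := by
  unfold F at hux ⊢; split_ifs at hux ⊢ <;> omega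

lemma F_next {a b : ℕ} (h3 : 3 ≤ a) (hab : a ≤ b) {u v : ℕ} (hu : u < b) (hv : v < b)
    (hne : u ≠ v) : ∃ w, w < b ∧ F a u w = 1 ∧ F a w v + 1 = F a u v := by
  by_cases hua : u < a
  · by_cases hva : v < a
    · exact ⟨v, hv, by unfold F; split_ifs <;> first | contradiction | omega, by unfold F; split_ifs <;> first | contradiction | omega⟩
    · by_cases hu0 : u = 0
      · exact ⟨a, by omega, by unfold F; split_ifs <;> first | contradiction | omega, by unfold F; split_ifs <;> first | contradiction | omega⟩
      · exact ⟨0, by omega, by unfold F; split_ifs <;> first | contradiction | omega, by unfold F; split_ifs <;> first | contradiction | omega⟩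
  · by_cases hva : v < a
    · by_cases hua' : u = a
      · exact ⟨0, by omega, by unfold F; split_ifs <;> first | contradiction | omega, by unfold F; split_ifs <;> first | contradiction | omega⟩
      · exact ⟨u - 1, by omega, by unfold F; split_ifs <;> first | contradiction | omega, by unfold F; split_ifs <;> first | contradiction | omega⟩
    · by_cases huv : u < v
      · exact ⟨u + 1, by omega, by unfold F; split_ifs <;> first | contradiction | omega, by unfold F; split_ifs <;> first | contradiction | omega⟩
      · exact ⟨u - 1, by omega, by unfold F; split_ifs <;> first | contradiction | omega, by unfold F; split_ifs <;> first | contradiction | omega⟩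

/-- The realization graph. -/
def G (a b : ℕ) : SimpleGraph (Fin b) where
  Adj u v := u ≠ v ∧ F a u.val v.val = 1
  symm := ⟨fun u v ⟨h1, h2⟩ => ⟨h1.symm, (F_comm a v.val u.val).trans h2⟩⟩
  loopless := ⟨fun _ ⟨h, _⟩ => h rfl⟩

lemma mk_ne {n i : ℕ} (hi : i < n) {v : Fin n} (h : v.val ≠ i) : (⟨i, hi⟩ : Fin n) ≠ v :=
  fun e => h (by rw [← e])

lemma exists_walk {a b : ℕ} (h3 : 3 ≤ a) (hab : a ≤ b) :
    ∀ n (u v : Fin b), F a u.val v.val = n → ∃ p : (G a b).Walk u v, p.length = n := by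
  intro n
  induction n using Nat.strong_induction_on with
  | _ n ih =>
    intro u v hF
    by_cases hne : u = v
    · subst hne
      have h0 := F_self a u.val
      exact ⟨SimpleGraph.Walk.nil, by simp; omega⟩
    · have hvals : u.val ≠ v.val := fun h => hne (Fin.ext h)
      obtain ⟨w, hwb, hw1, hw2⟩ := F_next h3 hab u.isLt v.isLt hvals
      have hn1 : 1 ≤ n := by
        rcases Nat.eq_zero_or_pos n with h0 | h
        · exact absurd (hF.trans h0) (F_ne_zero hvals)
        · exact h
      obtain ⟨p, hp⟩ := ih (n - 1) (by omega) ⟨w, hwb⟩ v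
        (by show F a w v.val = n - 1; omega)
      have hnew : u.val ≠ w := by
        intro h; rw [h] at hw1; have := F_self a w; omega
      have hadj : (G a b).Adj u ⟨w, hwb⟩ := ⟨fun h => hnew (congrArg Fin.val h), hw1⟩
      exact ⟨SimpleGraph.Walk.cons hadj p, by simp [hp]; omega⟩

lemma walk_le {a b : ℕ} {u v : Fin b} (p : (G a b).Walk u v) :
    F a u.val v.val ≤ p.length := by
  induction p with
  | nil => simp [F_self]
  | @cons x y z hadj p ih =>
    simp only [SimpleGraph.Walk.length_cons]
    have h1 := F_step x.val y.val z.val hadj.2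
    omega

lemma dist_eq {a b : ℕ} (h3 : 3 ≤ a) (hab : a ≤ b) (u v : Fin b) :
    (G a b).dist u v = F a u.val v.val := by
  obtain ⟨p, hp⟩ := exists_walk h3 hab (F a u.val v.val) u v rfl
  refine le_antisymm (hp ▸ SimpleGraph.dist_le p) ?_
  obtain ⟨q, hq⟩ := SimpleGraph.Reachable.exists_walk_length_eq_dist ⟨p⟩
  rw [← hq]; exact walk_le q

lemma connected {a b : ℕ} (h3 : 3 ≤ a) (hab : a ≤ b) (hb : 0 < b) :
    (G a b).Connected := by
  rw [SimpleGraph.connected_iff]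
  refine ⟨fun u v => ?_, ⟨⟨0, hb⟩⟩⟩
  obtain ⟨p, _⟩ := exists_walk h3 hab _ u v rfl
  exact ⟨p⟩

lemma univ_wtr {a b : ℕ} (h3 : 3 ≤ a) (hab : a ≤ b) :
    IsWTRSet (G a b) Finset.univ := by
  constructor
  · intro u v huv
    refine ⟨u, Finset.mem_univ u, ?_⟩
    rw [dist_eq h3 hab, dist_eq h3 hab]
    have h1 := F_self a u.val
    have h2 : F a v.val u.val ≠ 0 := F_ne_zero (fun h => huv (Fin.ext h.symm))
    omega
  · exact fun v _ u hu => absurd (Finset.mem_univ u) hu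

lemma resWt_eq {a b : ℕ} (h3 : 3 ≤ a) (hab : a ≤ b) : resWt (G a b) = b := by
  have hb3 : 3 ≤ b := le_trans h3 hab
  have D := dist_eq h3 hab
  have h1b : 1 < b := by omega
  have h2b : 2 < b := by omega
  have hbmem : b ∈ {r | ∀ W : Finset (Fin b), W.card = r → IsWTRSet (G a b) W} := by
    intro W hWc
    have hWu : W = Finset.univ := Finset.eq_univ_of_card W (by rw [hWc, Fintype.card_fin])
    rw [hWu]; exact univ_wtr h3 hab
  refine le_antisymm (Nat.sInf_le hbmem) (le_csInf ⟨b, hbmem⟩ ?_)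
  rintro r hr
  by_contra hlt
  push_neg at hlt
  rcases Nat.eq_zero_or_pos r with rfl | hr1
  · obtain ⟨w, hw, -⟩ := (hr ∅ rfl).1 ⟨1, h1b⟩ ⟨2, h2b⟩ (mk_ne h1b (by show (2:ℕ) ≠ 1; omega))
    exact absurd hw (Finset.notMem_empty w)
  · have htmem : (⟨2, h2b⟩ : Fin b) ∈ Finset.univ.erase ⟨1, h1b⟩ :=
      Finset.mem_erase.mpr ⟨mk_ne h2b (by show (1:ℕ) ≠ 2; omega), Finset.mem_univ _⟩
    have hs'card : ((Finset.univ.erase (⟨1, h1b⟩ : Fin b)).erase ⟨2, h2b⟩).card = b - 2 := by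
      rw [Finset.card_erase_of_mem htmem, Finset.card_erase_of_mem (Finset.mem_univ _),
        Finset.card_univ, Fintype.card_fin]
      omega
    obtain ⟨T, hTs, hTc⟩ := Finset.exists_subset_card_eq
      (s := (Finset.univ.erase (⟨1, h1b⟩ : Fin b)).erase ⟨2, h2b⟩) (n := r - 1) (by omega)
    have htT : (⟨2, h2b⟩ : Fin b) ∉ T := fun h => (Finset.mem_erase.mp (hTs h)).1 rfl
    have hWc : (insert (⟨2, h2b⟩ : Fin b) T).card = r := by
      rw [Finset.card_insert_of_notMem htT, hTc]; omega
    have hoW : (⟨1, h1b⟩ : Fin b) ∉ insert (⟨2, h2b⟩ : Fin b) T := by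
      intro h
      rcases Finset.mem_insert.mp h with h | h
      · exact absurd (congrArg Fin.val h) (by show (1:ℕ) ≠ 2; omega)
      · exact (Finset.mem_erase.mp (Finset.mem_erase.mp (hTs h)).2).1 rfl
    obtain ⟨w, hwW, hwne, hwd⟩ := (hr _ hWc).2 _ (Finset.mem_insert_self _ _) _ hoW
    apply hwd
    rw [D, D]
    have h2 : w.val ≠ 2 := fun h => hwne (Fin.ext h)
    have h1 : w.val ≠ 1 := fun h => hoW ((Fin.ext h : w = ⟨1, h1b⟩) ▸ hwW)
    have hwb := w.isLt
    show F a 1 w.val = F a 2 w.val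
    unfold F; split_ifs <;> first | contradiction | omega

lemma wtDim_eq {a b : ℕ} (h3 : 3 ≤ a) (hab : a ≤ b) : wtDim (G a b) = a := by
  have hb3 : 3 ≤ b := le_trans h3 hab
  have D := dist_eq h3 hab
  have h0b : 0 < b := by omega
  have h1b : 1 < b := by omega
  have h2b : 2 < b := by omega
  set W₀ : Finset (Fin b) := (Finset.range a).attachFin
    (fun m hm => lt_of_lt_of_le (Finset.mem_range.mp hm) hab) with hW₀def
  have memW0 : ∀ x : Fin b, x ∈ W₀ ↔ x.val < a := by
    intro x; rw [hW₀def, Finset.mem_attachFin, Finset.mem_range]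
  have cardW0 : W₀.card = a := by rw [hW₀def, Finset.card_attachFin, Finset.card_range]
  have hW0 : IsWTRSet (G a b) W₀ := by
    constructor
    · intro u v huv
      have hvals : u.val ≠ v.val := fun h => huv (Fin.ext h)
      by_cases hu : u.val < a
      · refine ⟨u, (memW0 u).mpr hu, ?_⟩
        rw [D, D]
        have h1 := F_self a u.val
        have h2 : F a v.val u.val ≠ 0 := F_ne_zero (fun h => hvals h.symm)
        omega
      · by_cases hv : v.val < a
        · refine ⟨v, (memW0 v).mpr hv, ?_⟩
          rw [D, D]
          have h1 := F_self a v.val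
          have h2 : F a u.val v.val ≠ 0 := F_ne_zero hvals
          omega
        · refine ⟨⟨0, h0b⟩, (memW0 _).mpr (by show (0:ℕ) < a; omega), ?_⟩
          rw [D, D]
          show F a u.val 0 ≠ F a v.val 0
          unfold F; split_ifs <;> first | contradiction | omega
    · intro v hvW u huW
      have hva : v.val < a := (memW0 v).mp hvW
      have hua : ¬ u.val < a := fun h => huW ((memW0 u).mpr h)
      by_cases hv0 : v.val = 0
      · refine ⟨⟨1, h1b⟩, (memW0 _).mpr (by show (1:ℕ) < a; omega), mk_ne h1b (by omega), ?_⟩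
        rw [D, D]
        show F a u.val 1 ≠ F a v.val 1
        unfold F; split_ifs <;> first | contradiction | omega
      · by_cases hua' : u.val = a
        · by_cases hv1 : v.val = 1
          · refine ⟨⟨2, h2b⟩, (memW0 _).mpr (by show (2:ℕ) < a; omega), mk_ne h2b (by omega), ?_⟩
            rw [D, D]
            show F a u.val 2 ≠ F a v.val 2
            unfold F; split_ifs <;> first | contradiction | omega
          · refine ⟨⟨1, h1b⟩, (memW0 _).mpr (by show (1:ℕ) < a; omega), mk_ne h1b (by omega), ?_⟩
            rw [D, D]
            show F a u.val 1 ≠ F a v.val 1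
            unfold F; split_ifs <;> first | contradiction | omega
        · refine ⟨⟨0, h0b⟩, (memW0 _).mpr (by show (0:ℕ) < a; omega), mk_ne h0b (by omega), ?_⟩
          rw [D, D]
          show F a u.val 0 ≠ F a v.val 0
          unfold F; split_ifs <;> first | contradiction | omega
  have hmem : a ∈ {k | ∃ W : Finset (Fin b), W.card = k ∧ IsWTRSet (G a b) W} :=
    ⟨W₀, cardW0, hW0⟩
  refine le_antisymm (Nat.sInf_le hmem) (le_csInf ⟨a, hmem⟩ ?_)
  rintro k ⟨W, rfl, hW⟩
  have claim : ∀ x : Fin b, 1 ≤ x.val → x.val < a → x ∈ W := by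
    intro x hx1 hxa
    by_contra hxW
    have hi : ∃ i : ℕ, 1 ≤ i ∧ i < a ∧ i ≠ x.val := by
      rcases eq_or_ne x.val 1 with h | h
      · exact ⟨2, by omega, by omega, by omega⟩
      · exact ⟨1, by omega, by omega, by omega⟩
    obtain ⟨i, hi1, hia, hix⟩ := hi
    have hib : i < b := by omega
    by_cases hiW : (⟨i, hib⟩ : Fin b) ∈ W
    · obtain ⟨w, hwW, hwne, hwd⟩ := hW.2 _ hiW x hxW
      apply hwd
      rw [D, D]
      have hw_i : w.val ≠ i := fun h => hwne (Fin.ext h)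
      have hw_x : w.val ≠ x.val := fun h => hxW ((Fin.ext h : w = x) ▸ hwW)
      have hwb := w.isLt
      show F a x.val w.val = F a i w.val
      unfold F; split_ifs <;> first | contradiction | omega
    · obtain ⟨w, hwW, hwd⟩ := hW.1 (⟨i, hib⟩ : Fin b) x (mk_ne hib (by omega))
      apply hwd
      rw [D, D]
      have hw_i : w.val ≠ i := fun h => hiW ((Fin.ext h : w = ⟨i, hib⟩) ▸ hwW)
      have hw_x : w.val ≠ x.val := fun h => hxW ((Fin.ext h : w = x) ▸ hwW)
      have hwb := w.isLt
      show F a i w.val = F a x.val w.val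
      unfold F; split_ifs <;> first | contradiction | omega
  set W₁ : Finset (Fin b) := (Finset.Ico 1 a).attachFin
    (fun m hm => by rw [Finset.mem_Ico] at hm; omega) with hW₁def
  have memW1 : ∀ x : Fin b, x ∈ W₁ ↔ 1 ≤ x.val ∧ x.val < a := by
    intro x; rw [hW₁def, Finset.mem_attachFin, Finset.mem_Ico]
  have cardW1 : W₁.card = a - 1 := by rw [hW₁def, Finset.card_attachFin, Nat.card_Ico]
  by_cases hex : ∃ x ∈ W, x.val = 0 ∨ a ≤ x.val
  · obtain ⟨x, hxW, hx⟩ := hex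
    have hxW1 : x ∉ W₁ := fun h => by rcases (memW1 x).mp h with ⟨h1, h2⟩; omega
    have hsub : insert x W₁ ⊆ W := by
      intro y hy
      rcases Finset.mem_insert.mp hy with rfl | hy
      · exact hxW
      · rcases (memW1 y).mp hy with ⟨h1, h2⟩
        exact claim y h1 h2
    calc a = (insert x W₁).card := by
          rw [Finset.card_insert_of_notMem hxW1, cardW1]; omega
      _ ≤ W.card := Finset.card_le_card hsub
  · push_neg at hex
    exfalso
    have hzW : (⟨0, h0b⟩ : Fin b) ∉ W := fun h => (hex _ h).1 rfl
    have hoW : (⟨1, h1b⟩ : Fin b) ∈ W := claim _ (le_refl 1) (by show (1:ℕ) < a; omega)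
    obtain ⟨w, hwW, hwne, hwd⟩ := hW.2 _ hoW _ hzW
    apply hwd
    rw [D, D]
    obtain ⟨hw0, hwa⟩ := hex w hwW
    have hw1 : w.val ≠ 1 := fun h => hwne (Fin.ext h)
    show F a 0 w.val = F a 1 w.val
    unfold F; split_ifs <;> first | contradiction | omega

end WTReal

/-- for all `3 ≤ a ≤ b` there is a connected graph `G` with
`dim_wt(G) = a` and `res_wt(G) = b`. -/
theorem exists_graph_wtDim_resWt (a b : ℕ) (ha : 3 ≤ a) (hab : a ≤ b) :
    ∃ (V : Type) (_ : Fintype V) (G : SimpleGraph V),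
      G.Connected ∧ wtDim G = a ∧ resWt G = b := by
  exact ⟨Fin b, inferInstance, WTReal.G a b, WTReal.connected ha hab (by omega),
    WTReal.wtDim_eq ha hab, WTReal.resWt_eq ha hab⟩
end
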